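/- arXiv:2011.14884 — 4 statements merged into one kernel-verified Lean document; each statement's English description precedes it below -/
import Mathlib

section
/- Let d ≥ 1 and k ≥ 1 be integers and set P_k(x) = (1+|x|²)^{k/2} on ℝ^d. Then for every multi-index α with |α| ≥ 1, the partial derivative ∂^α (P_k^{−1}) is bounded on ℝ^d, with sup_{x ∈ ℝ^d} |∂^α (1+|x|²)^{−k/2}| ≤ (4 k |α|²)^{|α|}. -/
noncomputable section

/-- Iterated directional (partial) derivative of `g` along the list of directions `l`:
`partialDerivList [v₁, …, v_m] g = ∂_{v_m} ⋯ ∂_{v₁} g`. -/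
def partialDerivList {E F : Type*} [NormedAddCommGroup E] [NormedSpace ℝ E]
    [NormedAddCommGroup F] [NormedSpace ℝ F] : List E → (E → F) → (E → F)
  | [], g => g
  | v :: l, g => partialDerivList l (fun x => fderiv ℝ g x v)

namespace PDLAux

variable {d : ℕ}

abbrev E (d : ℕ) := EuclideanSpace ℝ (Fin d)

abbrev Tm (d : ℕ) := ℝ × ℕ × List (Fin d)

def uf (x : E d) : ℝ := 1 + ‖x‖ ^ 2

lemma one_le_uf (x : E d) : 1 ≤ uf x := le_add_of_nonneg_right (sq_nonneg _)

lemma uf_pos (x : E d) : 0 < uf x := lt_of_lt_of_le one_pos (one_le_uf x)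

lemma hasFDerivAt_uf (x : E d) : HasFDerivAt uf (2 • (innerSL ℝ x)) x := by
  exact ((hasStrictFDerivAt_norm_sq x).hasFDerivAt).const_add 1

def lprod (L : List (Fin d)) (x : E d) : ℝ := (L.map (fun i => x i)).prod

@[simp] lemma lprod_nil (x : E d) : lprod [] x = 1 := rfl

@[simp] lemma lprod_cons (i : Fin d) (L : List (Fin d)) (x : E d) :
    lprod (i :: L) x = x i * lprod L x := by simp [lprod]

def DL : List (Fin d) → E d → (E d →L[ℝ] ℝ)
  | [], _ => 0
  | i :: L, x => x i • DL L x + lprod L x • (EuclideanSpace.proj i)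

lemma hasFDerivAt_lprod (L : List (Fin d)) (x : E d) :
    HasFDerivAt (lprod L) (DL L x) x := by
  induction L with
  | nil => exact hasFDerivAt_const (1 : ℝ) x
  | cons i L ih =>
    have h : HasFDerivAt (fun y : E d => y i)
        (EuclideanSpace.proj (𝕜 := ℝ) i) x := by
      simpa using (EuclideanSpace.proj (𝕜 := ℝ) (i := i)).hasFDerivAt (x := x)
    have := h.mul ih
    have hl : lprod (i :: L) = (fun y : E d => y i) * lprod L := by funext y; simp
    rw [hl]; simpa [DL] using this

def dprodTerms (v : Fin d) : List (Fin d) → List (ℝ × List (Fin d))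
  | [] => []
  | i :: L => ((if i = v then (1:ℝ) else 0), L) ::
      (dprodTerms v L).map (fun p => (p.1, i :: p.2))

lemma sum_map_mul_left' {α : Type*} (l : List α) (f g : α → ℝ) (r : ℝ) :
    (l.map (fun a => f a * (r * g a))).sum = r * (l.map (fun a => f a * g a)).sum := by
  induction l with
  | nil => simp
  | cons a l ih => simp [ih]; ring

lemma DL_apply (v : Fin d) (L : List (Fin d)) (x : E d) :
    DL L x (EuclideanSpace.single v 1)
      = ((dprodTerms v L).map (fun p => p.1 * lprod p.2 x)).sum := by
  induction L with
  | nil => simp [DL, dprodTerms]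
  | cons i L ih =>
    simp only [DL, dprodTerms, ContinuousLinearMap.add_apply,
      ContinuousLinearMap.smul_apply, ih, List.map_cons, List.sum_cons, List.map_map,
      Function.comp, lprod_cons]
    have hproj : (EuclideanSpace.proj (𝕜 := ℝ) i) (EuclideanSpace.single v 1)
        = if i = v then (1:ℝ) else 0 := by
      simp [EuclideanSpace.single_apply]
    have hmap : (List.map ((fun p : ℝ × List (Fin d) => p.1 * lprod p.2 x) ∘
        fun p : ℝ × List (Fin d) => (p.1, i :: p.2)) (dprodTerms v L))
        = List.map (fun p : ℝ × List (Fin d) => p.1 * (x i * lprod p.2 x)) (dprodTerms v L) := by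
      simp [Function.comp_def]
    rw [hproj, hmap,
      sum_map_mul_left' (dprodTerms v L) (fun p => p.1) (fun p => lprod p.2 x) (x i)]
    simp only [smul_eq_mul]; ring

/-- exponent of `uf` in a term -/
def ex (k a : ℕ) : ℝ := -(k : ℝ) / 2 - a

lemma ex_succ (k a : ℕ) : ex k (a + 1) = ex k a - 1 := by
  simp [ex]; push_cast; ring

def val (k : ℕ) (t : Tm d) (x : E d) : ℝ := t.1 * uf x ^ ex k t.2.1 * lprod t.2.2 x

def F (k : ℕ) (S : List (Tm d)) (x : E d) : ℝ := (S.map (fun t => val k t x)).sum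

@[simp] lemma F_nil (k : ℕ) (x : E d) : F k [] x = 0 := rfl

@[simp] lemma F_cons (k : ℕ) (t : Tm d) (S : List (Tm d)) (x : E d) :
    F k (t :: S) x = val k t x + F k S x := by simp [F]

def valD (k : ℕ) (t : Tm d) (x : E d) : E d →L[ℝ] ℝ :=
  t.1 • (uf x ^ ex k t.2.1 • DL t.2.2 x +
    lprod t.2.2 x • ((ex k t.2.1 * uf x ^ (ex k t.2.1 - 1)) • (2 • (innerSL ℝ x))))

lemma hasFDerivAt_rpow_uf (k a : ℕ) (x : E d) :
    HasFDerivAt (fun y => uf y ^ ex k a)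
      ((ex k a * uf x ^ (ex k a - 1)) • (2 • (innerSL ℝ x))) x :=
  (Real.hasDerivAt_rpow_const (p := ex k a) (Or.inl (uf_pos x).ne')).comp_hasFDerivAt x
    (hasFDerivAt_uf x)

lemma hasFDerivAt_val (k : ℕ) (t : Tm d) (x : E d) :
    HasFDerivAt (val k t) (valD k t x) x := by
  have := ((hasFDerivAt_rpow_uf k t.2.1 x).mul (hasFDerivAt_lprod t.2.2 x)).const_mul t.1
  have hfun : val k t = fun y => t.1 * (uf y ^ ex k t.2.1 * lprod t.2.2 y) := by
    funext y; simp [val, mul_assoc]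
  rw [hfun]; simpa [valD, smul_add] using this

def dTerm (k : ℕ) (v : Fin d) (t : Tm d) : List (Tm d) :=
  (t.1 * (-(k : ℝ) - 2 * t.2.1), t.2.1 + 1, v :: t.2.2) ::
    (dprodTerms v t.2.2).map (fun p => (t.1 * p.1, t.2.1, p.2))

lemma valD_apply (k : ℕ) (v : Fin d) (t : Tm d) (x : E d) :
    valD k t x (EuclideanSpace.single v 1) = F k (dTerm k v t) x := by
  obtain ⟨c, a, L⟩ := t
  have hin : (innerSL ℝ x) (EuclideanSpace.single v (1:ℝ)) = x v := by
    simp [EuclideanSpace.inner_single_right]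
  have hmap : List.map ((fun τ : Tm d => val k τ x) ∘ fun p : ℝ × List (Fin d) =>
        (c * p.1, a, p.2)) (dprodTerms v L)
      = List.map (fun p : ℝ × List (Fin d) =>
          p.1 * ((c * uf x ^ ex k a) * lprod p.2 x)) (dprodTerms v L) := by
    apply List.map_congr_left
    intro p _
    simp [val, Function.comp]; ring
  simp only [valD, dTerm, F, List.map_cons, List.sum_cons, List.map_map, hmap,
    ContinuousLinearMap.add_apply, ContinuousLinearMap.smul_apply, smul_eq_mul,
    DL_apply v L x, hin,
    sum_map_mul_left' (dprodTerms v L) (fun p => p.1) (fun p => lprod p.2 x)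
      (c * uf x ^ ex k a)]
  rw [← DL_apply v L x]
  simp only [val, lprod_cons, ex_succ, ex]
  push_cast
  ring


lemma hasFDerivAt_F (k : ℕ) (S : List (Tm d)) (x : E d) :
    HasFDerivAt (F k S) ((S.map (fun t => valD k t x)).sum) x := by
  induction S with
  | nil =>
    have : F k ([] : List (Tm d)) = fun _ => (0:ℝ) := rfl
    rw [this]; simpa using hasFDerivAt_const (0:ℝ) x
  | cons t S ih =>
    have hfun : F k (t :: S) = fun y => val k t y + F k S y := by
      funext y; simp
    rw [hfun]
    exact (hasFDerivAt_val k t x).add ih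

def Dstep (k : ℕ) (v : Fin d) (S : List (Tm d)) : List (Tm d) := S.flatMap (dTerm k v)

lemma clm_list_sum_apply (l : List (E d →L[ℝ] ℝ)) (y : E d) :
    l.sum y = (l.map (fun f => f y)).sum := by
  induction l with
  | nil => simp
  | cons f l ih => simp [ContinuousLinearMap.add_apply, ih]

lemma F_append (k : ℕ) (S T : List (Tm d)) (x : E d) :
    F k (S ++ T) x = F k S x + F k T x := by simp [F]

lemma F_Dstep (k : ℕ) (v : Fin d) (S : List (Tm d)) (x : E d) :
    F k (Dstep k v S) x = (S.map (fun t => F k (dTerm k v t) x)).sum := by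
  induction S with
  | nil => simp [Dstep, F]
  | cons t S ih => simp [Dstep, List.flatMap_cons, F_append, ← ih]

lemma fderiv_F_apply (k : ℕ) (v : Fin d) (S : List (Tm d)) (x : E d) :
    fderiv ℝ (F k S) x (EuclideanSpace.single v 1) = F k (Dstep k v S) x := by
  rw [(hasFDerivAt_F k S x).fderiv, clm_list_sum_apply, F_Dstep, List.map_map]
  apply congrArg
  apply List.map_congr_left
  intro t _
  exact valD_apply k v t x

def mass (S : List (Tm d)) : ℝ := (S.map (fun t => |t.1|)).sum

lemma mass_nonneg (S : List (Tm d)) : 0 ≤ mass S := by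
  apply List.sum_nonneg
  intro a ha
  obtain ⟨t, _, rfl⟩ := List.mem_map.1 ha
  exact abs_nonneg _

lemma abs_coord_le (x : E d) (i : Fin d) : |x i| ≤ ‖x‖ := by
  have h1 : (inner ℝ x (EuclideanSpace.single i (1:ℝ)) : ℝ) = x i := by
    simp [EuclideanSpace.inner_single_right]
  have h2 := abs_real_inner_le_norm x (EuclideanSpace.single i (1:ℝ))
  rw [h1] at h2
  simpa [EuclideanSpace.norm_single] using h2

lemma abs_lprod_le (L : List (Fin d)) (x : E d) : |lprod L x| ≤ ‖x‖ ^ L.length := by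
  induction L with
  | nil => simp
  | cons i L ih =>
    have := mul_le_mul (abs_coord_le x i) ih (abs_nonneg _) (norm_nonneg _)
    simpa [abs_mul, pow_succ, mul_comm, mul_assoc, mul_left_comm] using this

lemma norm_pow_le_uf (x : E d) (n : ℕ) : ‖x‖ ^ n ≤ uf x ^ ((n : ℝ) / 2) := by
  have hb : ‖x‖ ^ 2 ≤ uf x := by simp [uf]
  have h2 : ((‖x‖ ^ 2 : ℝ)) ^ ((n : ℝ) / 2) ≤ uf x ^ ((n : ℝ) / 2) :=
    Real.rpow_le_rpow (by positivity) hb (by positivity)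
  have h1 : ((‖x‖ ^ 2 : ℝ)) ^ ((n : ℝ) / 2) = ‖x‖ ^ n := by
    rw [← Real.rpow_natCast ‖x‖ 2, ← Real.rpow_mul (norm_nonneg x),
      show ((2:ℕ):ℝ) * ((n:ℝ)/2) = (n:ℝ) by push_cast; ring, Real.rpow_natCast]
  linarith

lemma abs_val_le (k : ℕ) (t : Tm d) (x : E d) (h : t.2.2.length ≤ 2 * t.2.1 + k) :
    |val k t x| ≤ |t.1| := by
  obtain ⟨c, a, L⟩ := t
  simp only [val, abs_mul]
  have hu : |uf x ^ ex k a| = uf x ^ ex k a := abs_of_pos (Real.rpow_pos_of_pos (uf_pos x) _)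
  rw [hu]
  calc |c| * uf x ^ ex k a * |lprod L x|
      ≤ |c| * uf x ^ ex k a * uf x ^ ((L.length : ℝ) / 2) := by
        exact mul_le_mul_of_nonneg_left
          ((abs_lprod_le L x).trans (norm_pow_le_uf x L.length))
          (mul_nonneg (abs_nonneg c) (Real.rpow_pos_of_pos (uf_pos x) _).le)
    _ = |c| * uf x ^ (ex k a + (L.length : ℝ) / 2) := by
        rw [mul_assoc, ← Real.rpow_add (uf_pos x)]
    _ ≤ |c| * 1 := by
        apply mul_le_mul_of_nonneg_left _ (abs_nonneg c)
        apply Real.rpow_le_one_of_one_le_of_nonpos (one_le_uf x)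
        have : (L.length : ℝ) ≤ 2 * a + k := by exact_mod_cast h
        simp only [ex]; linarith
    _ = |c| := mul_one _

lemma abs_F_le (k : ℕ) (S : List (Tm d)) (x : E d)
    (h : ∀ t ∈ S, t.2.2.length ≤ 2 * t.2.1 + k) : |F k S x| ≤ mass S := by
  induction S with
  | nil => simp [mass]
  | cons t S ih =>
    have h1 := abs_val_le k t x (h t (by simp))
    have h2 := ih (fun t ht => h t (by simp [ht]))
    calc |F k (t :: S) x| ≤ |val k t x| + |F k S x| := by
          rw [F_cons]; exact abs_add_le _ _
      _ ≤ |t.1| + mass S := add_le_add h1 h2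
      _ = mass (t :: S) := by simp [mass]


lemma mem_dprodTerms {v : Fin d} :
    ∀ {L : List (Fin d)} {p : ℝ × List (Fin d)}, p ∈ dprodTerms v L →
      |p.1| ≤ 1 ∧ p.2.length + 1 = L.length := by
  intro L
  induction L with
  | nil => intro p h; simp [dprodTerms] at h
  | cons i L ih =>
    intro p h
    rcases List.mem_cons.1 h with h1 | h2
    · subst h1
      constructor
      · dsimp only; split_ifs <;> norm_num
      · simp
    · obtain ⟨q, hq, rfl⟩ := List.mem_map.1 h2
      obtain ⟨hq1, hq2⟩ := ih hq
      refine ⟨hq1, ?_⟩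
      simp only [List.length_cons]
      omega

lemma sum_abs_dprodTerms (v : Fin d) (L : List (Fin d)) :
    ((dprodTerms v L).map (fun p => |p.1|)).sum ≤ (L.length : ℝ) := by
  induction L with
  | nil => simp [dprodTerms]
  | cons i L ih =>
    simp only [dprodTerms, List.map_cons, List.sum_cons, List.map_map, Function.comp_def,
      List.length_cons]
    have h1 : |if i = v then (1:ℝ) else 0| ≤ 1 := by split_ifs <;> norm_num
    push_cast
    linarith

lemma mass_append (S T : List (Tm d)) : mass (S ++ T) = mass S + mass T := by
  simp [mass]

lemma mass_dTerm_le (k : ℕ) (v : Fin d) (t : Tm d) (n : ℕ)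
    (h1 : t.2.1 ≤ n) (h2 : t.2.2.length ≤ t.2.1) :
    mass (dTerm k v t) ≤ |t.1| * ((k : ℝ) + 3 * n) := by
  obtain ⟨c, a, L⟩ := t
  simp only at h1 h2
  have hsum : ((dprodTerms v L).map (fun p => |c * p.1|)).sum
      = |c| * ((dprodTerms v L).map (fun p => |p.1|)).sum := by
    rw [← List.sum_map_mul_left]
    congr 1
    apply List.map_congr_left
    intro p _
    rw [abs_mul]
  have habs : |c * (-(k : ℝ) - 2 * a)| = |c| * ((k:ℝ) + 2 * a) := by
    rw [abs_mul]
    congr 1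
    rw [abs_of_nonpos (by
      have : (0:ℝ) ≤ (k:ℝ) := Nat.cast_nonneg k
      have : (0:ℝ) ≤ (a:ℝ) := Nat.cast_nonneg a
      linarith)]
    ring
  simp only [mass, dTerm, List.map_cons, List.sum_cons, List.map_map, Function.comp_def]
  rw [show (List.map (fun p : ℝ × List (Fin d) => |(c * p.1, a, p.2).1|) (dprodTerms v L))
      = List.map (fun p : ℝ × List (Fin d) => |c * p.1|) (dprodTerms v L) from rfl, hsum, habs]
  have hd := sum_abs_dprodTerms v L
  have hL : (L.length : ℝ) ≤ (a : ℝ) := by exact_mod_cast h2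
  have ha : (a : ℝ) ≤ (n : ℝ) := by exact_mod_cast h1
  have hc : (0:ℝ) ≤ |c| := abs_nonneg c
  nlinarith

lemma inv_dTerm (k : ℕ) (v : Fin d) (t : Tm d) (n : ℕ)
    (h1 : t.2.1 ≤ n) (h2 : t.2.2.length ≤ t.2.1) :
    ∀ τ ∈ dTerm k v t, τ.2.1 ≤ n + 1 ∧ τ.2.2.length ≤ τ.2.1 := by
  obtain ⟨c, a, L⟩ := t
  simp only at h1 h2
  intro τ hτ
  rcases List.mem_cons.1 hτ with rfl | hm
  · constructor
    · show a + 1 ≤ n + 1; omega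
    · show (v :: L).length ≤ a + 1
      simp only [List.length_cons]; omega
  · obtain ⟨p, hp, rfl⟩ := List.mem_map.1 hm
    have hpl := (mem_dprodTerms hp).2
    dsimp only at hpl
    constructor
    · show a ≤ n + 1; omega
    · show p.2.length ≤ a; omega

lemma inv_Dstep (k : ℕ) (v : Fin d) (S : List (Tm d)) (n : ℕ)
    (h : ∀ t ∈ S, t.2.1 ≤ n ∧ t.2.2.length ≤ t.2.1) :
    ∀ τ ∈ Dstep k v S, τ.2.1 ≤ n + 1 ∧ τ.2.2.length ≤ τ.2.1 := by
  intro τ hτ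
  obtain ⟨t, ht, hτ'⟩ := List.mem_flatMap.1 hτ
  exact inv_dTerm k v t n (h t ht).1 (h t ht).2 τ hτ'

lemma mass_Dstep_le (k : ℕ) (v : Fin d) (S : List (Tm d)) (n : ℕ)
    (h : ∀ t ∈ S, t.2.1 ≤ n ∧ t.2.2.length ≤ t.2.1) :
    mass (Dstep k v S) ≤ ((k : ℝ) + 3 * n) * mass S := by
  induction S with
  | nil => simp [Dstep, mass]
  | cons t S ih =>
    have h1 := mass_dTerm_le k v t n (h t (by simp)).1 (h t (by simp)).2
    have h2 := ih (fun t ht => h t (by simp [ht]))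
    have : Dstep k v (t :: S) = dTerm k v t ++ Dstep k v S := by
      simp [Dstep, List.flatMap_cons]
    rw [this, mass_append]
    have : mass (t :: S) = |t.1| + mass S := by simp [mass]
    rw [this]
    nlinarith [abs_nonneg t.1, mass_nonneg S]

lemma main (k : ℕ) (w' : List (Fin d)) :
    ∀ (S : List (Tm d)) (n : ℕ),
      (∀ t ∈ S, t.2.1 ≤ n ∧ t.2.2.length ≤ t.2.1) → ∀ x : E d,
      |partialDerivList (w'.map (fun i => EuclideanSpace.single i (1:ℝ))) (F k S) x|
        ≤ mass S * ((k:ℝ) + 3 * ((n:ℝ) + w'.length)) ^ w'.length := by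
  induction w' with
  | nil =>
    intro S n h x
    simp only [List.map_nil, List.length_nil, pow_zero, mul_one]
    exact abs_F_le k S x (fun t ht => by have := (h t ht).2; omega)
  | cons v w ihw =>
    intro S n h x
    have hrw : partialDerivList ((v :: w).map (fun i => EuclideanSpace.single i (1:ℝ))) (F k S)
        = partialDerivList (w.map (fun i => EuclideanSpace.single i (1:ℝ)))
            (F k (Dstep k v S)) := by
      show partialDerivList (w.map _)
        (fun y => fderiv ℝ (F k S) y (EuclideanSpace.single v 1)) = _
      have hfun : (fun y => fderiv ℝ (F k S) y (EuclideanSpace.single v 1))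
          = F k (Dstep k v S) := funext (fun y => fderiv_F_apply k v S y)
      rw [hfun]
    rw [hrw]
    have hb := ihw (Dstep k v S) (n + 1) (inv_Dstep k v S n h) x
    refine hb.trans ?_
    set B : ℝ := (k:ℝ) + 3 * ((n:ℝ) + (v :: w).length) with hB
    have hBeq : ((k:ℝ) + 3 * (((n+1 : ℕ):ℝ) + w.length)) = B := by
      rw [hB]; push_cast [List.length_cons]; ring
    rw [hBeq]
    have hBnn : 0 ≤ B := by rw [hB]; positivity
    have hkn : (k:ℝ) + 3 * n ≤ B := by
      rw [hB]; push_cast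
      have : (0:ℝ) ≤ (w.length : ℝ) := Nat.cast_nonneg _
      linarith
    have h1 : mass (Dstep k v S) * B ^ w.length ≤ (((k:ℝ) + 3 * n) * mass S) * B ^ w.length :=
      mul_le_mul_of_nonneg_right (mass_Dstep_le k v S n h) (pow_nonneg hBnn _)
    have h2 : (((k:ℝ) + 3 * n) * mass S) * B ^ w.length ≤ (B * mass S) * B ^ w.length :=
      mul_le_mul_of_nonneg_right (mul_le_mul_of_nonneg_right hkn (mass_nonneg S))
        (pow_nonneg hBnn _)
    calc mass (Dstep k v S) * B ^ w.length ≤ (B * mass S) * B ^ w.length := h1.trans h2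
      _ = mass S * B ^ (v :: w).length := by
          simp only [List.length_cons, pow_succ]; ring

end PDLAux

/-- For integers `d ≥ 1`, `k ≥ 1` and `P_k(x) = (1+|x|²)^{k/2}` on `ℝ^d`,
every iterated partial derivative `∂^α (P_k^{−1})` of order `|α| ≥ 1` is bounded, with
`sup_x |∂^α (1+|x|²)^{−k/2}| ≤ (4 k |α|²)^{|α|}`. A multi-index `α` with `|α| = m ≥ 1` is
encoded as a list `w` of `m` coordinate directions (with multiplicity, in any order). -/
theorem partialDeriv_inv_weight_bound
    (d k : ℕ) (hd : 1 ≤ d) (hk : 1 ≤ k)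
    (w : List (Fin d)) (hw : w ≠ []) :
    ∀ x : EuclideanSpace ℝ (Fin d),
      |partialDerivList (w.map fun i => (EuclideanSpace.single i (1 : ℝ)))
          (fun y : EuclideanSpace ℝ (Fin d) => ((1 : ℝ) + ‖y‖ ^ 2) ^ (-(k : ℝ) / 2)) x|
        ≤ (4 * (k : ℝ) * (w.length : ℝ) ^ 2) ^ w.length := by
  intro x
  have hfun : (fun y : EuclideanSpace ℝ (Fin d) => ((1:ℝ) + ‖y‖ ^ 2) ^ (-(k:ℝ)/2))
      = PDLAux.F k [((1:ℝ), 0, ([] : List (Fin d)))] := by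
    funext y
    simp [PDLAux.F, PDLAux.val, PDLAux.uf, PDLAux.ex]
  rw [hfun]
  have h0 : ∀ t ∈ [((1:ℝ), 0, ([] : List (Fin d)))], t.2.1 ≤ 0 ∧ t.2.2.length ≤ t.2.1 := by
    intro t ht
    simp only [List.mem_singleton] at ht
    subst ht
    simp
  have hm := PDLAux.main k w [((1:ℝ), 0, ([] : List (Fin d)))] 0 h0 x
  refine hm.trans ?_
  have hmass : PDLAux.mass [((1:ℝ), 0, ([] : List (Fin d)))] = 1 := by
    simp [PDLAux.mass]
  rw [hmass, one_mul]
  have hm1 : 1 ≤ w.length := List.length_pos_iff.2 hw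
  have hmr : (1:ℝ) ≤ (w.length : ℝ) := by exact_mod_cast hm1
  have hkr : (1:ℝ) ≤ (k:ℝ) := by exact_mod_cast hk
  apply pow_le_pow_left₀ (by positivity)
  push_cast
  have hm2 : (w.length:ℝ) ≤ (w.length:ℝ)^2 := by nlinarith
  have hmk : (w.length:ℝ)^2 ≤ (k:ℝ) * (w.length:ℝ)^2 := by nlinarith
  have hk2 : (k:ℝ) ≤ (k:ℝ) * (w.length:ℝ)^2 := by nlinarith
  linarith
end
end

section
/- Let ν > 0, C₁ > 0, and let f : [0,∞) → ℝ be measurable, nonincreasing, and satisfy f(s) ≥ C₁ (1+s)^{−ν} for all s ≥ 0. For ħ > 0 and j ∈ ℕ define G_j(ħ) = ∫_0^∞ f(ρ²) (ρ²/ħ)^j (j! ħ)^{−1} e^{−ρ²/ħ} ρ dρ. Then for every ħ > 0 and every j ∈ ℕ, G_j(ħ) ≥ (C₁/16) ((j+1/2)ħ + 1)^{−ν}. -/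
open MeasureTheory Finset

noncomputable section

/-- factorial product bound via pairing -/
lemma fact_bd (n : ℕ) : ∀ i : ℕ, i ≤ n →
    (n+1+i).factorial ≤ (n+1)^(2*i+1) * (n-i).factorial := by
  intro i
  induction i with
  | zero => intro _; simp [Nat.factorial_succ]
  | succ i ih =>
    intro h
    obtain ⟨k, hk⟩ := Nat.exists_eq_add_of_le h
    have ih' := ih (le_of_lt h)
    have h1 : n + 1 + (i+1) = (n+1+i) + 1 := by omega
    have h2 : n - i = (n - (i+1)) + 1 := by omega
    rw [h1, Nat.factorial_succ]
    calc (n+1+i+1) * (n+1+i).factorial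
        ≤ (n+1+i+1) * ((n+1)^(2*i+1) * (n-i).factorial) := Nat.mul_le_mul_left _ ih'
      _ = ((n+1+i+1) * (n - i)) * ((n+1)^(2*i+1) * (n-(i+1)).factorial) := by
          rw [h2, Nat.factorial_succ]; ring
      _ ≤ ((n+1)*(n+1)) * ((n+1)^(2*i+1) * (n-(i+1)).factorial) := by
          apply Nat.mul_le_mul_right
          have hni : n - i = k + 1 := by omega
          have hn : n = i + 1 + k := by omega
          rw [hni, hn]; nlinarith [sq_nonneg (i+1)]
      _ = (n+1)^(2*(i+1)+1) * (n-(i+1)).factorial := by ring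

lemma ratio_bd (n m : ℕ) (hm : m ≤ 2*n+1) :
    ((n:ℝ)+1)^m ≤ 4 * ((n:ℝ)+1/2)^m := by
  set L : ℝ := (n:ℝ) + 1/2 with hL
  have hLpos : 0 < L := by positivity
  have key : (n:ℝ)+1 ≤ L * Real.exp (1/(2*(n:ℝ)+1)) := by
    have h1 : (1/(2*(n:ℝ)+1)) + 1 ≤ Real.exp (1/(2*(n:ℝ)+1)) := Real.add_one_le_exp _
    have h2 : L * ((1/(2*(n:ℝ)+1)) + 1) = (n:ℝ)+1 := by
      have : (2*(n:ℝ)+1) ≠ 0 := by positivity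
      field_simp [hL]; ring
    calc (n:ℝ)+1 = L * ((1/(2*(n:ℝ)+1)) + 1) := h2.symm
      _ ≤ L * Real.exp (1/(2*(n:ℝ)+1)) := by
          apply mul_le_mul_of_nonneg_left h1 hLpos.le
  have hp : ((n:ℝ)+1)^m ≤ (L * Real.exp (1/(2*(n:ℝ)+1)))^m :=
    pow_le_pow_left₀ (by positivity) key m
  rw [mul_pow, ← Real.exp_nat_mul] at hp
  have hexp : Real.exp ((m:ℝ) * (1/(2*(n:ℝ)+1))) ≤ 4 := by
    have h3 : (m:ℝ) * (1/(2*(n:ℝ)+1)) ≤ 1 := by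
      rw [mul_one_div, div_le_one (by positivity)]
      have : (m:ℝ) ≤ 2*(n:ℝ)+1 := by exact_mod_cast hm
      linarith
    calc Real.exp ((m:ℝ) * (1/(2*(n:ℝ)+1))) ≤ Real.exp 1 := Real.exp_le_exp.2 h3
      _ ≤ 4 := by linarith [Real.exp_one_lt_d9.le]
  calc ((n:ℝ)+1)^m ≤ L^m * Real.exp ((m:ℝ) * (1/(2*(n:ℝ)+1))) := hp
    _ ≤ L^m * 4 := mul_le_mul_of_nonneg_left hexp (by positivity)
    _ = 4 * L^m := by ring

lemma head_le (n : ℕ) :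
    ∑ k ∈ range (n+1), ((n:ℝ)+1/2)^k / (k.factorial : ℝ) ≤
      7/8 * Real.exp ((n:ℝ)+1/2) := by
  set L : ℝ := (n:ℝ) + 1/2 with hL
  have hLpos : 0 < L := by positivity
  set A : ℝ := ∑ k ∈ range (n+1), L^k / (k.factorial : ℝ) with hA
  set B : ℝ := ∑ i ∈ range (n+1), L^(n+1+i) / ((n+1+i).factorial : ℝ) with hB
  have term : ∀ i ∈ range (n+1), L^(n-i) / ((n-i).factorial : ℝ) ≤
      4 * (L^(n+1+i) / ((n+1+i).factorial : ℝ)) := by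
    intro i hi
    have hi' : i ≤ n := by simpa [Nat.lt_succ_iff] using hi
    rw [show (4:ℝ) * (L^(n+1+i) / ((n+1+i).factorial : ℝ)) =
        (4 * L^(n+1+i)) / ((n+1+i).factorial : ℝ) from (mul_div_assoc _ _ _).symm,
      div_le_div_iff₀ (by positivity) (by positivity)]
    have hfb : ((n+1+i).factorial : ℝ) ≤ ((n:ℝ)+1)^(2*i+1) * ((n-i).factorial : ℝ) := by
      have := fact_bd n i hi'
      exact_mod_cast this
    calc L^(n-i) * ((n+1+i).factorial : ℝ)
        ≤ L^(n-i) * (((n:ℝ)+1)^(2*i+1) * ((n-i).factorial : ℝ)) := by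
          apply mul_le_mul_of_nonneg_left hfb (by positivity)
      _ ≤ L^(n-i) * ((4 * L^(2*i+1)) * ((n-i).factorial : ℝ)) := by
          apply mul_le_mul_of_nonneg_left _ (by positivity)
          apply mul_le_mul_of_nonneg_right (ratio_bd n (2*i+1) (by omega)) (by positivity)
      _ = (L^(n-i) * L^(2*i+1)) * (4 * ((n-i).factorial : ℝ)) := by ring
      _ = 4 * L^(n+1+i) * ((n-i).factorial : ℝ) := by
          rw [← pow_add]
          rw [show n - i + (2*i+1) = n+1+i from by omega]; ring
  have hAB : A ≤ 4 * B := by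
    have hrefl : A = ∑ i ∈ range (n+1), L^(n-i) / ((n-i).factorial : ℝ) := by
      rw [hA, ← Finset.sum_range_reflect]
      apply Finset.sum_congr rfl
      intro i hi
      congr 2 <;> omega
    rw [hrefl, hB, Finset.mul_sum]
    exact Finset.sum_le_sum term
  have hsum : A + B ≤ Real.exp L := by
    have : A + B = ∑ k ∈ range (2*n+2), L^k / (k.factorial : ℝ) := by
      have h2 : 2*n+2 = (n+1) + (n+1) := by omega
      rw [h2, Finset.sum_range_add]
    rw [this]
    exact Real.sum_le_exp_of_nonneg hLpos.le _
  have hexp : 0 < Real.exp L := Real.exp_pos L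
  linarith

def Phi (n : ℕ) (t : ℝ) : ℝ :=
  -(Real.exp (-t) * ∑ k ∈ range (n+1), ((n.factorial:ℝ)/(k.factorial:ℝ)) * t^k)

lemma hasDerivAt_Phi (n : ℕ) (t : ℝ) :
    HasDerivAt (Phi n) (t^n * Real.exp (-t)) t := by
  set c : ℕ → ℝ := fun k => (n.factorial:ℝ)/(k.factorial:ℝ) with hc
  have hS : HasDerivAt (fun t : ℝ => ∑ k ∈ range (n+1), c k * t^k)
      (∑ k ∈ range (n+1), c k * ((k:ℝ) * t^(k-1))) t := by
    apply HasDerivAt.fun_sum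
    intro k _
    exact (hasDerivAt_pow k t).const_mul (c k)
  have hE : HasDerivAt (fun t : ℝ => Real.exp (-t)) (Real.exp (-t) * (-1)) t :=
    (hasDerivAt_id t).neg.exp
  have hmul := (hE.mul hS).neg
  have key : -(Real.exp (-t) * (-1) * (∑ k ∈ range (n+1), c k * t^k) +
      Real.exp (-t) * (∑ k ∈ range (n+1), c k * ((k:ℝ) * t^(k-1)))) =
      t^n * Real.exp (-t) := by
    have hshift : (∑ k ∈ range (n+1), c k * ((k:ℝ) * t^(k-1)))
        = ∑ k ∈ range n, c k * t^k := by
      rw [Finset.sum_range_succ']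
      simp only [Nat.cast_zero, zero_mul, mul_zero, add_zero]
      apply Finset.sum_congr rfl
      intro i _
      have hcc : c (i+1) * ((i:ℝ)+1) = c i := by
        rw [hc]
        simp only
        rw [Nat.factorial_succ, div_mul_eq_mul_div, Nat.cast_mul, Nat.cast_add,
          Nat.cast_one]
        rw [mul_comm ((i:ℝ)+1) (i.factorial:ℝ)]
        rw [mul_div_mul_right _ _ (by positivity : ((i:ℝ)+1) ≠ 0)]
      calc c (i+1) * (((i+1:ℕ):ℝ) * t^(i+1-1)) = (c (i+1) * ((i:ℝ)+1)) * t^i := by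
            push_cast; norm_num; ring
        _ = c i * t^i := by rw [hcc]
    rw [hshift, Finset.sum_range_succ]
    have hcn : c n = 1 := by
      rw [hc]; simp only; rw [div_self (by positivity : (n.factorial:ℝ) ≠ 0)]
    rw [hcn]; ring
  rw [key] at hmul
  exact hmul

lemma Phi_zero (n : ℕ) : Phi n 0 = -(n.factorial:ℝ) := by
  unfold Phi
  rw [Finset.sum_range_succ']
  simp

lemma Phi_diff (n : ℕ) :
    (n.factorial:ℝ)/8 ≤ Phi n ((n:ℝ)+1/2) - Phi n 0 := by
  set L : ℝ := (n:ℝ)+1/2 with hL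
  have hS : ∑ k ∈ range (n+1), ((n.factorial:ℝ)/(k.factorial:ℝ)) * L^k
      = (n.factorial:ℝ) * ∑ k ∈ range (n+1), L^k / (k.factorial:ℝ) := by
    rw [Finset.mul_sum]
    apply Finset.sum_congr rfl
    intro k _; ring
  have hbound : Real.exp (-L) * ∑ k ∈ range (n+1),
      ((n.factorial:ℝ)/(k.factorial:ℝ)) * L^k ≤ 7/8 * (n.factorial:ℝ) := by
    rw [hS]
    calc Real.exp (-L) * ((n.factorial:ℝ) * ∑ k ∈ range (n+1), L^k / (k.factorial:ℝ))
        ≤ Real.exp (-L) * ((n.factorial:ℝ) * (7/8 * Real.exp L)) := by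
          apply mul_le_mul_of_nonneg_left _ (Real.exp_pos _).le
          exact mul_le_mul_of_nonneg_left (head_le n) (by positivity)
      _ = 7/8 * (n.factorial:ℝ) * (Real.exp (-L) * Real.exp L) := by ring
      _ = 7/8 * (n.factorial:ℝ) := by rw [← Real.exp_add]; simp
  rw [Phi_zero]
  unfold Phi
  have : (0:ℝ) < (n.factorial:ℝ) := by positivity
  linarith

/-- Let `ν > 0`, `C₁ > 0` and let `f : [0,∞) → ℝ` be measurable,
nonincreasing, with `f(s) ≥ C₁ (1+s)^{−ν}`. For `hbar > 0` and `j ∈ ℕ` let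
`G_j(hbar) = ∫_0^∞ f(ρ²) (ρ²/hbar)^j (j! hbar)^{−1} e^{−ρ²/hbar} ρ dρ`. Then
`G_j(hbar) ≥ (C₁/16) ((j+1/2) hbar + 1)^{−ν}`. -/
theorem toeplitz_eigenvalue_lower_bound
    (ν C₁ : ℝ) (hν : 0 < ν) (hC₁ : 0 < C₁)
    (f : ℝ → ℝ)
    (hmeas : AEMeasurable f ((volume : Measure ℝ).restrict (Set.Ici 0)))
    (hmono : AntitoneOn f (Set.Ici 0))
    (hlow : ∀ s : ℝ, 0 ≤ s → C₁ * (1 + s) ^ (-ν) ≤ f s) :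
    ∀ (hbar : ℝ), 0 < hbar → ∀ j : ℕ,
      C₁ / 16 * (((j : ℝ) + 1 / 2) * hbar + 1) ^ (-ν) ≤
        ∫ ρ in Set.Ioi (0 : ℝ),
          f (ρ ^ 2) * (ρ ^ 2 / hbar) ^ j / ((j.factorial : ℝ) * hbar) *
            Real.exp (-ρ ^ 2 / hbar) * ρ := by
  intro hbar hb j
  have hfac : (0:ℝ) < (j.factorial : ℝ) := by positivity
  set L : ℝ := (j:ℝ) + 1/2 with hLdef
  have hLpos : 0 < L := by positivity
  set R : ℝ := Real.sqrt (hbar * L) with hRdef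
  have hR0 : 0 ≤ R := Real.sqrt_nonneg _
  have hR2 : R^2 = hbar * L := Real.sq_sqrt (by positivity)
  set X : ℝ := (((j : ℝ) + 1 / 2) * hbar + 1) ^ (-ν) with hXdef
  have hXpos : 0 < X := Real.rpow_pos_of_pos (by positivity) _
  set c : ℝ := C₁ * X with hcdef
  have hcpos : 0 < c := by positivity
  -- the weight function
  set W : ℝ → ℝ := fun ρ =>
    (ρ^2/hbar)^j / ((j.factorial:ℝ) * hbar) * Real.exp (-ρ^2/hbar) * ρ with hWdef
  have hWcont : Continuous W := by
    apply Continuous.mul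
    apply Continuous.mul
    · exact (Continuous.div_const (Continuous.pow (Continuous.div_const (continuous_pow 2) hbar) j) _)
    · exact Real.continuous_exp.comp (Continuous.div_const (continuous_pow 2).neg hbar)
    · exact continuous_id
  have hWnn : ∀ ρ : ℝ, 0 ≤ ρ → 0 ≤ W ρ := by
    intro ρ hρ
    apply mul_nonneg (mul_nonneg _ (Real.exp_pos _).le) hρ
    apply div_nonneg (pow_nonneg (div_nonneg (sq_nonneg ρ) hb.le) j) (by positivity)
  -- full integrand
  set F : ℝ → ℝ := fun ρ =>
    f (ρ ^ 2) * (ρ ^ 2 / hbar) ^ j / ((j.factorial : ℝ) * hbar) *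
      Real.exp (-ρ ^ 2 / hbar) * ρ with hFdef
  have hFW : ∀ ρ : ℝ, F ρ = f (ρ^2) * W ρ := by
    intro ρ; simp only [hFdef, hWdef]; ring
  -- nonnegativity and upper bound of f
  have hf0 : ∀ s : ℝ, 0 ≤ s → 0 ≤ f s := by
    intro s hs
    refine le_trans ?_ (hlow s hs)
    exact mul_nonneg hC₁.le (Real.rpow_nonneg (by linarith) _)
  have hfub : ∀ s : ℝ, 0 ≤ s → f s ≤ f 0 := by
    intro s hs
    exact hmono (Set.mem_Ici.2 le_rfl) (Set.mem_Ici.2 hs) hs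
  -- measurability
  set g : ℝ → ℝ := fun x => f (max x 0) with hgdef
  have hganti : Antitone g := by
    intro x y hxy
    exact hmono (Set.mem_Ici.2 (le_max_right _ _)) (Set.mem_Ici.2 (le_max_right _ _))
      (max_le_max hxy le_rfl)
  have hgmeas : Measurable g := hganti.measurable
  have hFg : F = fun ρ => g (ρ^2) * W ρ := by
    funext ρ
    rw [hFW ρ]
    simp only [hgdef]
    rw [max_eq_left (sq_nonneg ρ)]
  have hFmeas : AEStronglyMeasurable F ((volume : Measure ℝ).restrict (Set.Ioi 0)) := by
    rw [hFg]
    exact ((hgmeas.comp ((continuous_pow 2).measurable)).mul hWcont.measurable).aestronglyMeasurable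
  -- integrability of W on Ioi 0
  have hWint : IntegrableOn W (Set.Ioi 0) volume := by
    have base : IntegrableOn (fun x : ℝ => x ^ (((2*j+1 : ℕ)):ℝ) *
        Real.exp (-(1/hbar) * x^2)) (Set.Ioi 0) volume := by
      apply integrableOn_rpow_mul_exp_neg_mul_sq (by positivity)
      have : (0:ℝ) ≤ ((2*j+1 : ℕ):ℝ) := Nat.cast_nonneg _
      linarith
    have h1 : IntegrableOn (fun x : ℝ => x ^ (2*j+1) *
        Real.exp (-(1/hbar) * x^2)) (Set.Ioi 0) volume :=
      IntegrableOn.congr_fun base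
        (fun x _ => by rw [Real.rpow_natCast]) measurableSet_Ioi
    have h2 : IntegrableOn (fun x : ℝ => (1/(hbar^j * (j.factorial:ℝ) * hbar)) *
        (x ^ (2*j+1) * Real.exp (-(1/hbar) * x^2))) (Set.Ioi 0) volume :=
      h1.const_mul _
    apply IntegrableOn.congr_fun h2 _ measurableSet_Ioi
    intro x _
    simp only [hWdef]
    rw [show -(1/hbar) * x^2 = -x^2/hbar from by ring, div_pow, ← pow_mul]
    field_simp
    ring
  -- integrability of F on Ioi 0
  have hFint : IntegrableOn F (Set.Ioi 0) volume := by
    apply Integrable.mono' (hWint.const_mul (f 0)) hFmeas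
    filter_upwards [ae_restrict_mem measurableSet_Ioi] with ρ hρ
    have hρ0 : (0:ℝ) < ρ := hρ
    have h1 : 0 ≤ F ρ := by
      rw [hFW ρ]
      exact mul_nonneg (hf0 _ (sq_nonneg _)) (hWnn ρ hρ0.le)
    rw [Real.norm_eq_abs, abs_of_nonneg h1, hFW ρ]
    exact mul_le_mul_of_nonneg_right (hfub _ (sq_nonneg _)) (hWnn ρ hρ0.le)
  -- antiderivative of W
  set Psi : ℝ → ℝ := fun x => Phi j (x^2/hbar) / (2*(j.factorial:ℝ)) with hPsidef
  have hPsi : ∀ x : ℝ, HasDerivAt Psi (W x) x := by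
    intro x
    have hu : HasDerivAt (fun y : ℝ => y^2/hbar) (2*x/hbar) x := by
      simpa using (hasDerivAt_pow 2 x).div_const hbar
    have hcomp := ((hasDerivAt_Phi j (x^2/hbar)).comp x hu).div_const (2*(j.factorial:ℝ))
    refine hcomp.congr_deriv ?_
    symm
    simp only [hWdef]
    rw [show -(x^2/hbar) = -x^2/hbar from (neg_div _ _).symm]
    field_simp
  -- value of the integral of W over Ioc 0 R
  have hWval : (1:ℝ)/16 ≤ ∫ ρ in Set.Ioc (0:ℝ) R, W ρ := by
    rw [← intervalIntegral.integral_of_le hR0]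
    rw [intervalIntegral.integral_eq_sub_of_hasDerivAt (fun x _ => hPsi x)
      (hWcont.intervalIntegrable 0 R)]
    have hPR : Psi R = Phi j L / (2*(j.factorial:ℝ)) := by
      simp only [hPsidef]
      rw [hR2, mul_comm hbar L, mul_div_assoc, div_self (ne_of_gt hb), mul_one]
    have hP0 : Psi 0 = Phi j 0 / (2*(j.factorial:ℝ)) := by
      simp only [hPsidef]
      norm_num
    rw [hPR, hP0, div_sub_div_same]
    have hd := Phi_diff j
    rw [show ((j:ℝ)+1/2) = L from rfl] at hd
    rw [show (1:ℝ)/16 = ((j.factorial:ℝ)/8)/(2*(j.factorial:ℝ)) from by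
      field_simp; ring]
    gcongr <;> linarith
  -- comparison on Ioc 0 R
  have hcomp2 : ∫ ρ in Set.Ioc (0:ℝ) R, c * W ρ ≤ ∫ ρ in Set.Ioc (0:ℝ) R, F ρ := by
    apply setIntegral_mono_on
    · exact (continuous_const.mul hWcont).integrableOn_Ioc
    · exact hFint.mono_set Set.Ioc_subset_Ioi_self
    · exact measurableSet_Ioc
    · intro ρ hρ
      obtain ⟨hρ0, hρR⟩ := hρ
      have hsq : ρ^2 ≤ hbar * L := by
        rw [← hR2]
        exact pow_le_pow_left₀ hρ0.le hρR 2
      have hfl : c ≤ f (ρ^2) := by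
        calc c = C₁ * (1 + hbar*L) ^ (-ν) := by
              rw [hcdef, hXdef]
              congr 2
              rw [hLdef]; ring
          _ ≤ f (hbar * L) := hlow _ (by positivity)
          _ ≤ f (ρ^2) := hmono (Set.mem_Ici.2 (sq_nonneg _)) (Set.mem_Ici.2 (by positivity)) hsq
      rw [hFW ρ]
      exact mul_le_mul_of_nonneg_right hfl (hWnn ρ hρ0.le)
  -- extend to Ioi 0
  have hext : ∫ ρ in Set.Ioc (0:ℝ) R, F ρ ≤ ∫ ρ in Set.Ioi (0:ℝ), F ρ := by
    apply setIntegral_mono_set hFint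
    · filter_upwards [ae_restrict_mem measurableSet_Ioi] with ρ hρ
      rw [hFW ρ]
      exact mul_nonneg (hf0 _ (sq_nonneg _)) (hWnn ρ (le_of_lt hρ))
    · exact (Set.Ioc_subset_Ioi_self).eventuallyLE
  calc C₁ / 16 * X = c * (1/16) := by rw [hcdef]; ring
    _ ≤ c * ∫ ρ in Set.Ioc (0:ℝ) R, W ρ := by
        exact mul_le_mul_of_nonneg_left hWval hcpos.le
    _ = ∫ ρ in Set.Ioc (0:ℝ) R, c * W ρ := (integral_const_mul c _).symm
    _ ≤ ∫ ρ in Set.Ioc (0:ℝ) R, F ρ := hcomp2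
    _ ≤ ∫ ρ in Set.Ioi (0:ℝ), F ρ := hext
end
end

section
/- Let 3/2 < ν ≤ 7/2, C₀ > 0, and let f : [0,∞) → ℝ be bounded, continuously differentiable, and satisfy −2C₀(1+s)^{−ν−1} ≤ f'(s) ≤ 0 for all s ≥ 0. For ħ ∈ (0,1] and j ∈ ℕ define G_j(ħ) = ∫_0^∞ f(ρ²) (ρ²/ħ)^j (j! ħ)^{−1} e^{−ρ²/ħ} ρ dρ. Then for every j ∈ ℕ: (i) G_j(ħ) − G_{j+1}(ħ) = −ħ ∫_0^∞ f'(ρ²) (ρ²/ħ)^{j+1} ((j+1)! ħ)^{−1} e^{−ρ²/ħ} ρ dρ; and (ii) 0 ≤ G_j(ħ) − G_{j+1}(ħ) ≤ 8^{ν+1} ħ C₀ (jħ + 1/2)^{−(ν+1)}. -/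
open MeasureTheory

set_option maxHeartbeats 2000000

noncomputable section

open Set Real

lemma natcast_neg_one_lt (l : ℕ) : (-1:ℝ) < l :=
  lt_of_lt_of_le neg_one_lt_zero (Nat.cast_nonneg l)

-- L1: integrability
lemma intOn_poly_exp {c : ℝ} (hc : 0 < c) (l : ℕ) :
    IntegrableOn (fun s : ℝ => s ^ l * Real.exp (-(c * s))) (Set.Ioi 0) := by
  have h := integrableOn_rpow_mul_exp_neg_mul_rpow (s := (l : ℝ)) (p := 1)
    (natcast_neg_one_lt l) zero_lt_one hc
  have : (fun x : ℝ => x ^ (l : ℝ) * Real.exp (-c * x ^ (1 : ℝ)))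
      = fun s : ℝ => s ^ l * Real.exp (-(c * s)) := by
    funext x; rw [Real.rpow_natCast, Real.rpow_one, neg_mul]
  rwa [this] at h

-- L2: value
lemma int_poly_exp {c : ℝ} (hc : 0 < c) (l : ℕ) :
    ∫ s in Set.Ioi (0:ℝ), s ^ l * Real.exp (-(c * s)) = l.factorial / c ^ (l + 1) := by
  have h := Real.integral_rpow_mul_exp_neg_mul_Ioi (a := (l : ℝ) + 1) (r := c)
    (by positivity) hc
  simp only [add_sub_cancel_right] at h
  have h1 : (fun t : ℝ => t ^ (l:ℝ) * Real.exp (-(c * t)))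
      = fun s : ℝ => s ^ l * Real.exp (-(c * s)) := by
    funext x; rw [Real.rpow_natCast]
  rw [h1] at h
  rw [h, Real.Gamma_nat_eq_factorial,
    show (l:ℝ) + 1 = ((l+1 : ℕ) : ℝ) by push_cast; ring, Real.rpow_natCast]
  rw [div_pow, one_pow]
  ring

-- substitution
lemma subst_sq (h : ℝ → ℝ) :
    ∫ ρ in Set.Ioi (0:ℝ), h (ρ ^ 2) * ρ = (1/2) * ∫ s in Set.Ioi (0:ℝ), h s := by
  have := MeasureTheory.integral_comp_rpow_Ioi_of_pos (g := h) (p := 2) zero_lt_two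
  rw [← this]
  rw [show ∫ x in Set.Ioi (0:ℝ), (2 * x ^ ((2:ℝ) - 1)) • h (x ^ (2:ℝ))
      = ∫ x in Set.Ioi (0:ℝ), 2 * (h (x ^ 2) * x) by
    congr 1; funext x
    rw [show (2:ℝ) - 1 = 1 by norm_num, Real.rpow_one,
      show x ^ (2:ℝ) = x ^ 2 by rw [← Real.rpow_natCast x 2]; norm_num]
    simp [smul_eq_mul]; ring]
  rw [MeasureTheory.integral_const_mul]
  ring

noncomputable def phiAux (hbar : ℝ) (k : ℕ) (s : ℝ) : ℝ :=
  (s / hbar) ^ k / (k.factorial * hbar) * Real.exp (-s / hbar)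

lemma phiAux_nonneg {hbar : ℝ} (h0 : 0 < hbar) (k : ℕ) {s : ℝ} (hs : 0 ≤ s) :
    0 ≤ phiAux hbar k s := by
  unfold phiAux; positivity

lemma phiAux_cont {hbar : ℝ} (h0 : 0 < hbar) (k : ℕ) : Continuous (phiAux hbar k) := by
  unfold phiAux; fun_prop

lemma scaled_eq {hbar : ℝ} (h0 : 0 < hbar) (l : ℕ) (s : ℝ) :
    (s / hbar) ^ l * Real.exp (-s / hbar)
      = (1 / hbar ^ l) * (s ^ l * Real.exp (-(hbar⁻¹ * s))) := by
  rw [div_pow, show -s/hbar = -(hbar⁻¹*s) by ring]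
  ring

lemma intOn_scaled {hbar : ℝ} (h0 : 0 < hbar) (l : ℕ) :
    IntegrableOn (fun s : ℝ => (s / hbar) ^ l * Real.exp (-s / hbar)) (Set.Ioi 0) := by
  have h := (intOn_poly_exp (inv_pos.mpr h0) l).const_mul (1 / hbar ^ l)
  rw [show (fun s : ℝ => (s / hbar) ^ l * Real.exp (-s / hbar))
      = fun s => (1 / hbar ^ l) * (s ^ l * Real.exp (-(hbar⁻¹ * s))) from
      funext (scaled_eq h0 l)]
  exact h

lemma int_scaled {hbar : ℝ} (h0 : 0 < hbar) (l : ℕ) :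
    ∫ s in Set.Ioi (0:ℝ), (s / hbar) ^ l * Real.exp (-s / hbar)
      = l.factorial * hbar := by
  rw [show (fun s : ℝ => (s / hbar) ^ l * Real.exp (-s / hbar))
      = fun s => (1 / hbar ^ l) * (s ^ l * Real.exp (-(hbar⁻¹ * s))) from
      funext (scaled_eq h0 l)]
  rw [MeasureTheory.integral_const_mul, int_poly_exp (inv_pos.mpr h0) l]
  have hne : hbar ≠ 0 := ne_of_gt h0
  field_simp
  rw [div_pow, one_pow, pow_succ]; field_simp

lemma phiAux_integrableOn {hbar : ℝ} (h0 : 0 < hbar) (k : ℕ) :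
    IntegrableOn (phiAux hbar k) (Set.Ioi 0) := by
  have h := (intOn_scaled h0 k).div_const ((k.factorial : ℝ) * hbar)
  rw [show phiAux hbar k
      = fun s => ((s / hbar) ^ k * Real.exp (-s / hbar)) / ((k.factorial : ℝ) * hbar) from
      funext fun s => by unfold phiAux; ring]
  exact h

lemma integral_phiAux {hbar : ℝ} (h0 : 0 < hbar) (k : ℕ) :
    ∫ s in Set.Ioi (0:ℝ), phiAux hbar k s = 1 := by
  unfold phiAux
  rw [show (fun s : ℝ => (s / hbar) ^ k / (k.factorial * hbar) * Real.exp (-s / hbar))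
      = fun s => ((s / hbar) ^ k * Real.exp (-s / hbar)) / ((k.factorial : ℝ) * hbar) from
      funext fun s => by ring]
  rw [integral_div, int_scaled h0 k]
  have h2 : (k.factorial : ℝ) ≠ 0 := Nat.cast_ne_zero.mpr k.factorial_ne_zero
  field_simp

lemma intOn_mul_phiAux {hbar : ℝ} (h0 : 0 < hbar) (g : ℝ → ℝ) (Bg : ℝ)
    (hgc : ContinuousOn g (Set.Ici 0)) (hgb : ∀ s, 0 ≤ s → |g s| ≤ Bg) (k : ℕ) :
    IntegrableOn (fun s => g s * phiAux hbar k s) (Set.Ioi 0) := by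
  apply Integrable.mono' ((phiAux_integrableOn h0 k).const_mul Bg)
  · exact ((hgc.mono Ioi_subset_Ici_self).aestronglyMeasurable measurableSet_Ioi).mul
      ((phiAux_cont h0 k).aestronglyMeasurable.restrict)
  · filter_upwards [ae_restrict_mem measurableSet_Ioi] with s hs
    have hs' : (0:ℝ) ≤ s := le_of_lt hs
    rw [norm_mul, Real.norm_eq_abs, Real.norm_eq_abs,
      abs_of_nonneg (phiAux_nonneg h0 k hs')]
    exact mul_le_mul_of_nonneg_right (hgb s hs') (phiAux_nonneg h0 k hs')

lemma hasDerivAt_phiAux {hbar : ℝ} (h0 : 0 < hbar) (j : ℕ) (s : ℝ) :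
    HasDerivAt (phiAux hbar (j+1))
      ((phiAux hbar j s - phiAux hbar (j+1) s) / hbar) s := by
  have h1 : HasDerivAt (fun t : ℝ => t / hbar) (1 / hbar) s := by
    simpa using (hasDerivAt_id s).div_const hbar
  have h2 := h1.pow (j+1)
  have h3 : HasDerivAt (fun t : ℝ => -t / hbar) (-(1 / hbar)) s := by
    exact ((hasDerivAt_id s).neg.div_const hbar).congr_deriv (by ring)
  have h4 := h3.exp
  have h5 := (h2.div_const (((j+1).factorial : ℝ) * hbar)).mul h4
  unfold phiAux
  refine h5.congr_deriv ?_
  simp only [Nat.add_sub_cancel, Pi.pow_apply]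
  have hje : ((j+1).factorial : ℝ) = (j+1) * j.factorial := by
    push_cast [Nat.factorial_succ]; ring
  have hj0 : (j.factorial : ℝ) ≠ 0 := Nat.cast_ne_zero.mpr j.factorial_ne_zero
  have hne : hbar ≠ 0 := ne_of_gt h0
  rw [hje]
  field_simp
  push_cast
  ring

lemma hasDerivAt_g {hbar : ℝ} (h0 : 0 < hbar) (j : ℕ) (s : ℝ) :
    HasDerivAt (fun t => hbar * phiAux hbar (j+1) t)
      (phiAux hbar j s - phiAux hbar (j+1) s) s := by
  have h := (hasDerivAt_phiAux h0 j s).const_mul hbar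
  refine h.congr_deriv ?_
  field_simp

lemma tendsto_phiAux {hbar : ℝ} (h0 : 0 < hbar) (k : ℕ) :
    Filter.Tendsto (phiAux hbar k) Filter.atTop (nhds 0) := by
  have h1 : Filter.Tendsto (fun s : ℝ => s / hbar) Filter.atTop Filter.atTop :=
    Filter.tendsto_id.atTop_div_const h0
  have h2 := (tendsto_pow_mul_exp_neg_atTop_nhds_zero k).comp h1
  have h3 : phiAux hbar k
      = fun s => ((s/hbar) ^ k * Real.exp (-(s/hbar))) / ((k.factorial : ℝ) * hbar) := by
    funext s; unfold phiAux; rw [neg_div]; ring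
  rw [h3]
  have h4 := h2.div_const ((k.factorial : ℝ) * hbar)
  simpa [Function.comp] using h4

lemma ibp_key {hbar : ℝ} (h0 : 0 < hbar) (f f' : ℝ → ℝ) (B C' : ℝ)
    (hB : ∀ s : ℝ, 0 ≤ s → |f s| ≤ B)
    (hderiv : ∀ s : ℝ, 0 ≤ s → HasDerivWithinAt f (f' s) (Set.Ici 0) s)
    (hcont : ContinuousOn f' (Set.Ici 0))
    (hf'bd : ∀ s : ℝ, 0 ≤ s → |f' s| ≤ C') (j : ℕ) :
    (∫ s in Set.Ioi (0:ℝ), f s * phiAux hbar j s)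
      - (∫ s in Set.Ioi (0:ℝ), f s * phiAux hbar (j+1) s)
      = - hbar * ∫ s in Set.Ioi (0:ℝ), f' s * phiAux hbar (j+1) s := by
  have hfc : ContinuousOn f (Set.Ici 0) := fun s hs => (hderiv s hs).continuousWithinAt
  set u : ℝ → ℝ := fun s => f s * (hbar * phiAux hbar (j+1) s) with hu_def
  set u' : ℝ → ℝ := fun s =>
    f' s * (hbar * phiAux hbar (j+1) s)
      + (f s * phiAux hbar j s - f s * phiAux hbar (j+1) s) with hu'_def
  -- integrability pieces
  have hint_fj : IntegrableOn (fun s => f s * phiAux hbar j s) (Set.Ioi 0) :=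
    intOn_mul_phiAux h0 f B hfc hB j
  have hint_fm : IntegrableOn (fun s => f s * phiAux hbar (j+1) s) (Set.Ioi 0) :=
    intOn_mul_phiAux h0 f B hfc hB (j+1)
  have hint_f'm : IntegrableOn (fun s => f' s * phiAux hbar (j+1) s) (Set.Ioi 0) :=
    intOn_mul_phiAux h0 f' C' hcont hf'bd (j+1)
  have hint_A : IntegrableOn (fun s => f' s * (hbar * phiAux hbar (j+1) s)) (Set.Ioi 0) := by
    have h := hint_f'm.const_mul hbar
    rw [show (fun s => f' s * (hbar * phiAux hbar (j+1) s))
        = fun s => hbar * (f' s * phiAux hbar (j+1) s) from funext fun s => by ring]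
    exact h
  have hint_B : IntegrableOn
      (fun s => f s * phiAux hbar j s - f s * phiAux hbar (j+1) s) (Set.Ioi 0) := by
    exact hint_fj.sub hint_fm
  have hint_u' : IntegrableOn u' (Set.Ioi 0) := by exact hint_A.add hint_B
  -- derivative
  have hud : ∀ s ∈ Set.Ioi (0:ℝ), HasDerivAt u (u' s) s := by
    intro s hs
    have hf := (hderiv s (le_of_lt hs)).hasDerivAt (Ici_mem_nhds hs)
    have h := hf.mul (hasDerivAt_g h0 j s)
    refine h.congr_deriv ?_
    simp only [hu'_def]
    ring
  -- continuity at 0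
  have huc : ContinuousWithinAt u (Set.Ici 0) 0 :=
    ((hfc 0 Set.self_mem_Ici).mul
      ((continuous_const.mul (phiAux_cont h0 (j+1))).continuousWithinAt))
  -- tendsto
  have hg0 : Filter.Tendsto (fun s => hbar * phiAux hbar (j+1) s) Filter.atTop (nhds 0) := by
    have := (tendsto_phiAux h0 (j+1)).const_mul hbar
    simpa using this
  have hut : Filter.Tendsto u Filter.atTop (nhds 0) := by
    have hBmul : Filter.Tendsto (fun s => B * (hbar * phiAux hbar (j+1) s))
        Filter.atTop (nhds 0) := by simpa using hg0.const_mul B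
    have hBneg : Filter.Tendsto (fun s => -(B * (hbar * phiAux hbar (j+1) s)))
        Filter.atTop (nhds 0) := by simpa using hBmul.neg
    apply tendsto_of_tendsto_of_tendsto_of_le_of_le' hBneg hBmul
    · filter_upwards [Filter.eventually_ge_atTop (0:ℝ)] with s hs
      have hphi : 0 ≤ hbar * phiAux hbar (j+1) s :=
        mul_nonneg (le_of_lt h0) (phiAux_nonneg h0 (j+1) hs)
      have := (abs_le.mp (hB s hs)).1
      calc -(B * (hbar * phiAux hbar (j+1) s)) = (-B) * (hbar * phiAux hbar (j+1) s) := by ring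
        _ ≤ f s * (hbar * phiAux hbar (j+1) s) := by
            apply mul_le_mul_of_nonneg_right _ hphi; linarith
    · filter_upwards [Filter.eventually_ge_atTop (0:ℝ)] with s hs
      have hphi : 0 ≤ hbar * phiAux hbar (j+1) s :=
        mul_nonneg (le_of_lt h0) (phiAux_nonneg h0 (j+1) hs)
      exact mul_le_mul_of_nonneg_right (abs_le.mp (hB s hs)).2 hphi
  have hibp := MeasureTheory.integral_Ioi_of_hasDerivAt_of_tendsto huc hud hint_u' hut
  have hu0 : u 0 = 0 := by
    simp only [hu_def, phiAux]
    norm_num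
  rw [hu0, sub_zero] at hibp
  have hsplit : ∫ s in Set.Ioi (0:ℝ), u' s
      = (∫ s in Set.Ioi (0:ℝ), f' s * (hbar * phiAux hbar (j+1) s))
        + ((∫ s in Set.Ioi (0:ℝ), f s * phiAux hbar j s)
          - (∫ s in Set.Ioi (0:ℝ), f s * phiAux hbar (j+1) s)) := by
    rw [MeasureTheory.integral_add hint_A hint_B,
      MeasureTheory.integral_sub hint_fj hint_fm]
  rw [hsplit] at hibp
  have hA : (∫ s in Set.Ioi (0:ℝ), f' s * (hbar * phiAux hbar (j+1) s))
      = hbar * ∫ s in Set.Ioi (0:ℝ), f' s * phiAux hbar (j+1) s := by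
    rw [← MeasureTheory.integral_const_mul]
    congr 1; funext s; ring
  rw [hA] at hibp
  linarith

lemma intOn_apow_phiAux {hbar : ℝ} (h0 : 0 < hbar) (j i m : ℕ) :
    IntegrableOn (fun s => ((j:ℝ) * hbar / (hbar + s)) ^ i * phiAux hbar m s) (Set.Ioi 0) := by
  have hmono : ∀ s ∈ Set.Ioi (0:ℝ), ((j:ℝ) * hbar / (hbar + s)) ^ i ≤ (j:ℝ)^i := by
    intro s hs
    have hs0 : (0:ℝ) < s := hs
    apply pow_le_pow_left₀ (by positivity)
    rw [div_le_iff₀ (by linarith)]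
    nlinarith [Nat.cast_nonneg (α := ℝ) j]
  have hcontq : ContinuousOn (fun s : ℝ => ((j:ℝ) * hbar / (hbar + s)) ^ i) (Set.Ioi 0) := by
    apply ContinuousOn.pow
    apply ContinuousOn.div continuousOn_const (by fun_prop)
    intro s hs
    have : (0:ℝ) < s := hs
    positivity
  apply Integrable.mono' ((phiAux_integrableOn h0 m).const_mul ((j:ℝ)^i))
  · exact (hcontq.aestronglyMeasurable measurableSet_Ioi).mul
      ((phiAux_cont h0 m).aestronglyMeasurable.restrict)
  · filter_upwards [ae_restrict_mem measurableSet_Ioi] with s hs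
    have hs' : (0:ℝ) ≤ s := le_of_lt hs
    rw [norm_mul, Real.norm_eq_abs, Real.norm_eq_abs,
      abs_of_nonneg (phiAux_nonneg h0 m hs'),
      abs_of_nonneg (by positivity : (0:ℝ) ≤ ((j:ℝ) * hbar / (hbar + s)) ^ i)]
    exact mul_le_mul_of_nonneg_right (hmono s hs) (phiAux_nonneg h0 m hs')

lemma sum_choose_factorial_le (n : ℕ) :
    (∑ l ∈ Finset.range (n+1), (n.choose l : ℝ) * l.factorial) ≤ 3 * n.factorial := by
  have h1 : ∀ l ∈ Finset.range (n+1), (n.choose l : ℝ) * l.factorial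
      = n.factorial * (1 / (n-l).factorial) := by
    intro l hl
    have hln : l ≤ n := Nat.lt_succ_iff.mp (Finset.mem_range.mp hl)
    have := Nat.choose_mul_factorial_mul_factorial hln
    have h2 : ((n.choose l : ℕ) : ℝ) * l.factorial * (n-l).factorial = n.factorial := by
      exact_mod_cast congrArg (Nat.cast : ℕ → ℝ) this
    have h3 : ((n-l).factorial : ℝ) ≠ 0 := Nat.cast_ne_zero.mpr (Nat.factorial_ne_zero _)
    field_simp
    linarith [h2]
  rw [Finset.sum_congr rfl h1, ← Finset.mul_sum]
  have h4 : (∑ l ∈ Finset.range (n+1), (1 / ((n-l).factorial : ℝ)))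
      = ∑ k ∈ Finset.range (n+1), (1 / (k.factorial : ℝ)) := by
    rw [← Finset.sum_range_reflect]
    apply Finset.sum_congr rfl
    intro l hl
    have h : n - (n + 1 - 1 - l) = l := by
      have := Finset.mem_range.mp hl; omega
    rw [h]
  rw [h4]
  have h5 : (∑ k ∈ Finset.range (n+1), (1 / (k.factorial : ℝ))) ≤ Real.exp 1 := by
    have := Real.sum_le_exp_of_nonneg zero_le_one (n+1)
    simpa using this
  have h6 : Real.exp 1 ≤ 3 := le_of_lt (lt_trans Real.exp_one_lt_d9 (by norm_num))
  have h7 : (0:ℝ) ≤ n.factorial := Nat.cast_nonneg _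
  nlinarith [h5, h6, h7]

lemma Mbound {hbar : ℝ} (h0 : 0 < hbar) (j i n : ℕ) (hin : i + n = j + 1) :
    ∫ s in Set.Ioi (0:ℝ), ((j:ℝ) * hbar / (hbar + s)) ^ i * phiAux hbar (j+1) s
      ≤ 3 * (j:ℝ)^i * (n.factorial / ((j+1).factorial : ℝ)) := by
  set m := j + 1 with hm
  set D : ℝ → ℝ := fun s =>
    (j:ℝ)^i * ((1 + s/hbar)^n * Real.exp (-s/hbar) / ((m.factorial : ℝ) * hbar)) with hD
  have hDpt : ∀ s ∈ Set.Ioi (0:ℝ),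
      ((j:ℝ) * hbar / (hbar + s)) ^ i * phiAux hbar m s ≤ D s := by
    intro s hs
    have hs0 : (0:ℝ) < s := hs
    have hhs : (0:ℝ) < hbar + s := by linarith
    have hkey : (hbar/(hbar+s))^i * (s/hbar)^m ≤ (1 + s/hbar)^n := by
      have h1 : (s/hbar)^m ≤ (1 + s/hbar)^m := by
        apply pow_le_pow_left₀ (by positivity)
        linarith [div_nonneg (le_of_lt hs0) (le_of_lt h0)]
      have h2 : (hbar/(hbar+s)) * (1 + s/hbar) = 1 := by field_simp
      calc (hbar/(hbar+s))^i * (s/hbar)^m ≤ (hbar/(hbar+s))^i * (1 + s/hbar)^m := by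
            apply mul_le_mul_of_nonneg_left h1 (by positivity)
        _ = ((hbar/(hbar+s)) * (1 + s/hbar))^i * (1 + s/hbar)^n := by
            rw [← hin, pow_add, mul_pow]; ring
        _ = (1 + s/hbar)^n := by rw [h2, one_pow, one_mul]
    have hrw : ((j:ℝ) * hbar / (hbar + s)) ^ i * phiAux hbar m s
        = (j:ℝ)^i * ((hbar/(hbar+s))^i * (s/hbar)^m) * (Real.exp (-s/hbar) / ((m.factorial : ℝ) * hbar)) := by
      unfold phiAux
      rw [show (j:ℝ) * hbar / (hbar + s) = (j:ℝ) * (hbar/(hbar+s)) by ring, mul_pow]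
      ring
    rw [hrw]
    have he : 0 ≤ Real.exp (-s/hbar) / ((m.factorial : ℝ) * hbar) := by positivity
    have := mul_le_mul_of_nonneg_left hkey (pow_nonneg (Nat.cast_nonneg j) i)
    calc (j:ℝ)^i * ((hbar/(hbar+s))^i * (s/hbar)^m) * (Real.exp (-s/hbar) / ((m.factorial : ℝ) * hbar))
        ≤ (j:ℝ)^i * (1 + s/hbar)^n * (Real.exp (-s/hbar) / ((m.factorial : ℝ) * hbar)) := by
          apply mul_le_mul_of_nonneg_right _ he
          exact this
      _ = D s := by simp only [hD]; ring
  have hint_lhs : IntegrableOn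
      (fun s => ((j:ℝ) * hbar / (hbar + s)) ^ i * phiAux hbar m s) (Set.Ioi 0) :=
    intOn_apow_phiAux h0 j i m
  -- expand D as a sum
  have hDsum : ∀ s : ℝ, D s = ∑ l ∈ Finset.range (n+1),
      ((j:ℝ)^i * (n.choose l : ℝ) / ((m.factorial : ℝ) * hbar))
        * ((s/hbar)^l * Real.exp (-s/hbar)) := by
    intro s
    simp only [hD]
    rw [add_comm (1:ℝ) (s/hbar), add_pow]
    rw [Finset.sum_mul, Finset.sum_div, Finset.mul_sum]
    apply Finset.sum_congr rfl
    intro l _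
    rw [one_pow]
    ring
  have hint_D : IntegrableOn D (Set.Ioi 0) := by
    rw [show D = fun s => ∑ l ∈ Finset.range (n+1),
      ((j:ℝ)^i * (n.choose l : ℝ) / ((m.factorial : ℝ) * hbar))
        * ((s/hbar)^l * Real.exp (-s/hbar)) from funext hDsum]
    apply MeasureTheory.integrable_finset_sum
    intro l _
    exact (intOn_scaled h0 l).const_mul _
  have hIle := MeasureTheory.setIntegral_mono_on hint_lhs hint_D measurableSet_Ioi hDpt
  refine le_trans hIle ?_
  have hDval : ∫ s in Set.Ioi (0:ℝ), D s
      = ∑ l ∈ Finset.range (n+1),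
        ((j:ℝ)^i * (n.choose l : ℝ) / ((m.factorial : ℝ) * hbar)) * (l.factorial * hbar) := by
    rw [show (fun s => D s) = fun s => ∑ l ∈ Finset.range (n+1),
      ((j:ℝ)^i * (n.choose l : ℝ) / ((m.factorial : ℝ) * hbar))
        * ((s/hbar)^l * Real.exp (-s/hbar)) from funext hDsum]
    rw [MeasureTheory.integral_finset_sum _ (fun l _ => (intOn_scaled h0 l).const_mul _)]
    apply Finset.sum_congr rfl
    intro l _
    rw [MeasureTheory.integral_const_mul, int_scaled h0 l]
  rw [hDval]
  have hne : hbar ≠ 0 := ne_of_gt h0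
  have hsimp : ∀ l ∈ Finset.range (n+1),
      ((j:ℝ)^i * (n.choose l : ℝ) / ((m.factorial : ℝ) * hbar)) * (l.factorial * hbar)
      = ((j:ℝ)^i / (m.factorial : ℝ)) * ((n.choose l : ℝ) * l.factorial) := by
    intro l _
    have hmne : ((m.factorial : ℝ)) ≠ 0 := Nat.cast_ne_zero.mpr (Nat.factorial_ne_zero _)
    field_simp
  rw [Finset.sum_congr rfl hsimp, ← Finset.mul_sum]
  have hb := sum_choose_factorial_le n
  have hpos : (0:ℝ) ≤ (j:ℝ)^i / (m.factorial : ℝ) := by positivity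
  calc ((j:ℝ)^i / (m.factorial : ℝ)) * (∑ l ∈ Finset.range (n+1), (n.choose l : ℝ) * l.factorial)
      ≤ ((j:ℝ)^i / (m.factorial : ℝ)) * (3 * n.factorial) := by
        exact mul_le_mul_of_nonneg_left hb hpos
    _ = 3 * (j:ℝ)^i * (n.factorial / ((m.factorial : ℝ))) := by ring

/-- Let `3/2 < ν ≤ 7/2`, `C₀ > 0`, and let `f : [0,∞) → ℝ` be bounded and
continuously differentiable with `−2C₀(1+s)^{−ν−1} ≤ f'(s) ≤ 0`. With
`G_j(hbar) = ∫_0^∞ f(ρ²) (ρ²/hbar)^j (j! hbar)^{−1} e^{−ρ²/hbar} ρ dρ` for `hbar ∈ (0,1]`: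
(i) `G_j − G_{j+1} = −hbar ∫_0^∞ f'(ρ²) (ρ²/hbar)^{j+1} ((j+1)! hbar)^{−1} e^{−ρ²/hbar} ρ dρ`;
(ii) `0 ≤ G_j − G_{j+1} ≤ 8^{ν+1} hbar C₀ (j hbar + 1/2)^{−(ν+1)}`. -/
theorem toeplitz_eigenvalue_difference
    (ν C₀ : ℝ) (hν₁ : 3 / 2 < ν) (hν₂ : ν ≤ 7 / 2) (hC₀ : 0 < C₀)
    (f f' : ℝ → ℝ)
    (hbdd : ∃ B : ℝ, ∀ s : ℝ, 0 ≤ s → |f s| ≤ B)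
    (hderiv : ∀ s : ℝ, 0 ≤ s → HasDerivWithinAt f (f' s) (Set.Ici 0) s)
    (hcont : ContinuousOn f' (Set.Ici 0))
    (hlow : ∀ s : ℝ, 0 ≤ s → -2 * C₀ * (1 + s) ^ (-ν - 1) ≤ f' s)
    (hhigh : ∀ s : ℝ, 0 ≤ s → f' s ≤ 0)
    (G : ℝ → ℕ → ℝ)
    (hG : ∀ (hbar : ℝ) (j : ℕ), G hbar j =
      ∫ ρ in Set.Ioi (0 : ℝ),
        f (ρ ^ 2) * (ρ ^ 2 / hbar) ^ j / ((j.factorial : ℝ) * hbar) *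
          Real.exp (-ρ ^ 2 / hbar) * ρ) :
    ∀ (hbar : ℝ), 0 < hbar → hbar ≤ 1 → ∀ j : ℕ,
      (G hbar j - G hbar (j + 1) =
        -hbar * ∫ ρ in Set.Ioi (0 : ℝ),
          f' (ρ ^ 2) * (ρ ^ 2 / hbar) ^ (j + 1) / (((j + 1).factorial : ℝ) * hbar) *
            Real.exp (-ρ ^ 2 / hbar) * ρ) ∧
      0 ≤ G hbar j - G hbar (j + 1) ∧
      G hbar j - G hbar (j + 1) ≤
        (8 : ℝ) ^ (ν + 1) * hbar * C₀ * ((j : ℝ) * hbar + 1 / 2) ^ (-(ν + 1)) := by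
  intro hbar h0 h1 j
  obtain ⟨B, hB⟩ := hbdd
  have hfc : ContinuousOn f (Set.Ici 0) := fun s hs => (hderiv s hs).continuousWithinAt
  have hf'bd : ∀ s : ℝ, 0 ≤ s → |f' s| ≤ 2 * C₀ := by
    intro s hs
    rw [abs_le]
    constructor
    · have h2 : (1 + s) ^ (-ν - 1) ≤ 1 :=
        Real.rpow_le_one_of_one_le_of_nonpos (by linarith) (by linarith)
      have h3 := hlow s hs
      nlinarith
    · linarith [hhigh s hs, hC₀.le]
  -- G in s-coordinates
  have hGs : ∀ k : ℕ, G hbar k = (1/2) * ∫ s in Set.Ioi (0:ℝ), f s * phiAux hbar k s := by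
    intro k
    rw [hG, ← subst_sq (fun s => f s * phiAux hbar k s)]
    exact MeasureTheory.setIntegral_congr_fun measurableSet_Ioi
      (fun ρ _ => by unfold phiAux; ring)
  have hRs : (∫ ρ in Set.Ioi (0 : ℝ),
        f' (ρ ^ 2) * (ρ ^ 2 / hbar) ^ (j + 1) / (((j + 1).factorial : ℝ) * hbar) *
          Real.exp (-ρ ^ 2 / hbar) * ρ)
      = (1/2) * ∫ s in Set.Ioi (0:ℝ), f' s * phiAux hbar (j+1) s := by
    rw [← subst_sq (fun s => f' s * phiAux hbar (j+1) s)]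
    exact MeasureTheory.setIntegral_congr_fun measurableSet_Ioi
      (fun ρ _ => by unfold phiAux; ring)
  have hkey := ibp_key h0 f f' B (2*C₀) hB hderiv hcont hf'bd j
  have hdiff : G hbar j - G hbar (j+1)
      = -(hbar/2) * ∫ s in Set.Ioi (0:ℝ), f' s * phiAux hbar (j+1) s := by
    rw [hGs j, hGs (j+1), ← mul_sub, hkey]
    ring
  have hInonpos : (∫ s in Set.Ioi (0:ℝ), f' s * phiAux hbar (j+1) s) ≤ 0 := by
    have hnn : 0 ≤ ∫ s in Set.Ioi (0:ℝ), -(f' s * phiAux hbar (j+1) s) := by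
      apply MeasureTheory.setIntegral_nonneg measurableSet_Ioi
      intro s hs
      have hs' : (0:ℝ) ≤ s := le_of_lt hs
      have := mul_nonpos_of_nonpos_of_nonneg (hhigh s hs') (phiAux_nonneg h0 (j+1) hs')
      linarith
    rw [MeasureTheory.integral_neg] at hnn
    linarith
  refine ⟨?_, ?_, ?_⟩
  · rw [hdiff, hRs]; ring
  · rw [hdiff]
    nlinarith [h0.le]
  · -- upper bound
    set X : ℝ := (j : ℝ) * hbar + 1/2 with hXdef
    have hX : 0 < X := by positivity
    set E : ℝ := ∫ s in Set.Ioi (0:ℝ), (1+s) ^ (-ν-1) * phiAux hbar (j+1) s with hEdef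
    have hcont_pow : ContinuousOn (fun s : ℝ => (1+s) ^ (-ν-1)) (Set.Ioi 0) := by
      apply ContinuousOn.rpow_const (by fun_prop)
      intro s hs
      have : (0:ℝ) < s := hs
      exact Or.inl (by positivity)
    have hE_int : IntegrableOn (fun s => (1+s) ^ (-ν-1) * phiAux hbar (j+1) s) (Set.Ioi 0) := by
      apply Integrable.mono' ((phiAux_integrableOn h0 (j+1)).const_mul 1)
      · exact (hcont_pow.aestronglyMeasurable measurableSet_Ioi).mul
          ((phiAux_cont h0 (j+1)).aestronglyMeasurable.restrict)
      · filter_upwards [ae_restrict_mem measurableSet_Ioi] with s hs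
        have hs' : (0:ℝ) ≤ s := le_of_lt hs
        have hp1 : (0:ℝ) ≤ (1+s) ^ (-ν-1) := Real.rpow_nonneg (by linarith) _
        rw [norm_mul, Real.norm_eq_abs, Real.norm_eq_abs,
          abs_of_nonneg (phiAux_nonneg h0 (j+1) hs'), abs_of_nonneg hp1]
        exact mul_le_mul_of_nonneg_right
          (Real.rpow_le_one_of_one_le_of_nonpos (x := 1+s) (z := -ν-1)
            (by linarith) (by linarith))
          (phiAux_nonneg h0 (j+1) hs')
    have hstep1 : G hbar j - G hbar (j+1) ≤ hbar * C₀ * E := by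
      rw [hdiff]
      have hmono : (∫ s in Set.Ioi (0:ℝ), -(f' s * phiAux hbar (j+1) s))
          ≤ ∫ s in Set.Ioi (0:ℝ), (2*C₀) * ((1+s) ^ (-ν-1) * phiAux hbar (j+1) s) := by
        apply MeasureTheory.setIntegral_mono_on
        · exact (intOn_mul_phiAux h0 f' (2*C₀) hcont hf'bd (j+1)).neg
        · exact hE_int.const_mul _
        · exact measurableSet_Ioi
        · intro s hs
          have hs' : (0:ℝ) ≤ s := le_of_lt hs
          have hl := hlow s hs'
          have hphi := phiAux_nonneg h0 (j+1) hs'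
          have : -(f' s) ≤ 2*C₀*(1+s) ^ (-ν-1) := by linarith
          calc -(f' s * phiAux hbar (j+1) s) = (-(f' s)) * phiAux hbar (j+1) s := by ring
            _ ≤ (2*C₀*(1+s) ^ (-ν-1)) * phiAux hbar (j+1) s :=
                mul_le_mul_of_nonneg_right this hphi
            _ = (2*C₀) * ((1+s) ^ (-ν-1) * phiAux hbar (j+1) s) := by ring
      rw [MeasureTheory.integral_neg, MeasureTheory.integral_const_mul] at hmono
      have hE2 : -(∫ s in Set.Ioi (0:ℝ), f' s * phiAux hbar (j+1) s) ≤ 2*C₀*E := by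
        rw [hEdef]; exact hmono
      nlinarith [h0.le]
    have hXinv : X ^ (-ν-1) = (X ^ (ν+1))⁻¹ := by
      rw [show -ν-1 = -(ν+1) by ring, Real.rpow_neg hX.le]
    have hXp : (0:ℝ) < X ^ (ν+1) := Real.rpow_pos_of_pos hX _
    have hstep2 : E ≤ (8:ℝ) ^ (ν+1) * X ^ (-ν-1) := by
      rcases le_or_gt ((j:ℝ)*hbar) (15/2) with hcase | hcase
      · -- Case A : X ≤ 8
        have hE1 : E ≤ 1 := by
          have hle : E ≤ ∫ s in Set.Ioi (0:ℝ), phiAux hbar (j+1) s := by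
            apply MeasureTheory.setIntegral_mono_on hE_int
              (phiAux_integrableOn h0 (j+1)) measurableSet_Ioi
            intro s hs
            have hs' : (0:ℝ) ≤ s := le_of_lt hs
            nth_rewrite 2 [← one_mul (phiAux hbar (j+1) s)]
            exact mul_le_mul_of_nonneg_right
              (Real.rpow_le_one_of_one_le_of_nonpos (x := 1+s) (z := -ν-1)
                (by linarith) (by linarith)) (phiAux_nonneg h0 (j+1) hs')
          rwa [integral_phiAux h0 (j+1)] at hle
        have h8 : X ≤ 8 := by rw [hXdef]; linarith
        have hle8 : X ^ (ν+1) ≤ (8:ℝ) ^ (ν+1) :=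
          Real.rpow_le_rpow hX.le h8 (by linarith)
        rw [hXinv]
        calc E ≤ 1 := hE1
          _ ≤ 8 ^ (ν+1) * (X ^ (ν+1))⁻¹ := by
              rw [← div_eq_mul_inv, le_div_iff₀ hXp, one_mul]; exact hle8
      · -- Case B : j*hbar > 15/2
        have hj8 : 8 ≤ j := by
          by_contra hcon
          push_neg at hcon
          have hj7 : (j:ℝ) ≤ 7 := by exact_mod_cast Nat.lt_succ_iff.mp hcon
          nlinarith [Nat.cast_nonneg (α := ℝ) j]
        obtain ⟨k, rfl⟩ : ∃ k, j = k + 8 := ⟨j - 8, by omega⟩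
        have hkc : (0:ℝ) ≤ (k:ℝ) := Nat.cast_nonneg k
        have hJc : ((k+8:ℕ):ℝ) = (k:ℝ) + 8 := by push_cast; ring
        -- pointwise bound
        have hpt : ∀ s ∈ Set.Ioi (0:ℝ), (1+s) ^ (-ν-1) * phiAux hbar (k+8+1) s
            ≤ (X ^ (ν+1))⁻¹ *
              ((16/15)^2 * ((((k+8:ℕ):ℝ) * hbar / (hbar + s))^2 * phiAux hbar (k+8+1) s)
                + (16/15)^5 * ((((k+8:ℕ):ℝ) * hbar / (hbar + s))^5 * phiAux hbar (k+8+1) s)) := by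
          intro s hs
          have hs0 : (0:ℝ) < s := hs
          have h1s : (0:ℝ) < 1 + s := by linarith
          have hhs : (0:ℝ) < hbar + s := by linarith
          set r : ℝ := X / (1+s) with hrdef
          have hr0 : 0 < r := div_pos hX h1s
          have hXle : X ≤ (16/15) * (((k+8:ℕ):ℝ) * hbar) := by
            rw [hXdef]; rw [hJc] at hcase ⊢; linarith
          have hra : r ≤ (16/15) * (((k+8:ℕ):ℝ) * hbar / (hbar + s)) := by
            calc r ≤ ((16/15) * (((k+8:ℕ):ℝ) * hbar)) / (hbar + s) :=
                div_le_div₀ (by positivity) hXle hhs (by linarith)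
              _ = (16/15) * (((k+8:ℕ):ℝ) * hbar / (hbar + s)) := by ring
          have hrp : r ^ (ν+1) ≤ r^2 + r^5 := by
            rcases le_total r 1 with hr1 | hr1
            · have h := Real.rpow_le_rpow_of_exponent_ge hr0 hr1
                (by linarith : (2:ℝ) ≤ ν+1)
              rw [show (2:ℝ) = ((2:ℕ):ℝ) by norm_num, Real.rpow_natCast] at h
              linarith [pow_nonneg hr0.le 5]
            · have h := Real.rpow_le_rpow_of_exponent_le hr1
                (by linarith : ν+1 ≤ (5:ℝ))
              rw [show (5:ℝ) = ((5:ℕ):ℝ) by norm_num, Real.rpow_natCast] at h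
              linarith [pow_nonneg (le_trans zero_le_one hr1) 2]
          have hconv : (1+s) ^ (-ν-1) = r ^ (ν+1) * (X ^ (ν+1))⁻¹ := by
            rw [show -ν-1 = -(ν+1) by ring, Real.rpow_neg h1s.le, hrdef,
              Real.div_rpow hX.le h1s.le]
            have hne1 : ((1+s) ^ (ν+1)) ≠ 0 := ne_of_gt (Real.rpow_pos_of_pos h1s _)
            have hne2 : (X ^ (ν+1)) ≠ 0 := ne_of_gt hXp
            field_simp
          have hr2 : r^2 ≤ (16/15)^2 * (((k+8:ℕ):ℝ) * hbar / (hbar + s))^2 := by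
            have := pow_le_pow_left₀ hr0.le hra 2
            rwa [mul_pow] at this
          have hr5 : r^5 ≤ (16/15)^5 * (((k+8:ℕ):ℝ) * hbar / (hbar + s))^5 := by
            have := pow_le_pow_left₀ hr0.le hra 5
            rwa [mul_pow] at this
          have hphi := phiAux_nonneg h0 (k+8+1) hs0.le
          rw [hconv]
          calc r ^ (ν+1) * (X ^ (ν+1))⁻¹ * phiAux hbar (k+8+1) s
              ≤ (r^2 + r^5) * (X ^ (ν+1))⁻¹ * phiAux hbar (k+8+1) s := by
                apply mul_le_mul_of_nonneg_right _ hphi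
                apply mul_le_mul_of_nonneg_right hrp (by positivity)
            _ ≤ ((16/15)^2 * (((k+8:ℕ):ℝ) * hbar / (hbar + s))^2
                  + (16/15)^5 * (((k+8:ℕ):ℝ) * hbar / (hbar + s))^5)
                  * (X ^ (ν+1))⁻¹ * phiAux hbar (k+8+1) s := by
                apply mul_le_mul_of_nonneg_right _ hphi
                apply mul_le_mul_of_nonneg_right _ (by positivity)
                linarith
            _ = (X ^ (ν+1))⁻¹ *
                ((16/15)^2 * ((((k+8:ℕ):ℝ) * hbar / (hbar + s))^2 * phiAux hbar (k+8+1) s)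
                  + (16/15)^5 * ((((k+8:ℕ):ℝ) * hbar / (hbar + s))^5 * phiAux hbar (k+8+1) s)) := by
                ring
        have hint2 := intOn_apow_phiAux h0 (k+8) 2 (k+8+1)
        have hint5 := intOn_apow_phiAux h0 (k+8) 5 (k+8+1)
        have hint_rhs : IntegrableOn (fun s =>
            (X ^ (ν+1))⁻¹ *
              ((16/15)^2 * ((((k+8:ℕ):ℝ) * hbar / (hbar + s))^2 * phiAux hbar (k+8+1) s)
                + (16/15)^5 * ((((k+8:ℕ):ℝ) * hbar / (hbar + s))^5 * phiAux hbar (k+8+1) s)))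
            (Set.Ioi 0) := by
          exact (((hint2.const_mul _).add (hint5.const_mul _)).const_mul _)
        have hEle := MeasureTheory.setIntegral_mono_on hE_int hint_rhs measurableSet_Ioi hpt
        rw [MeasureTheory.integral_const_mul,
          MeasureTheory.integral_add (hint2.const_mul _) (hint5.const_mul _),
          MeasureTheory.integral_const_mul, MeasureTheory.integral_const_mul] at hEle
        -- moment bounds
        have hM2 := Mbound h0 (k+8) 2 (k+7) (by omega)
        have hM5 := Mbound h0 (k+8) 5 (k+4) (by omega)
        have hI2nn : 0 ≤ ∫ s in Set.Ioi (0:ℝ),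
            (((k+8:ℕ):ℝ) * hbar / (hbar + s))^2 * phiAux hbar (k+8+1) s := by
          apply MeasureTheory.setIntegral_nonneg measurableSet_Ioi
          intro s hs
          have hs0 : (0:ℝ) < s := hs
          have := phiAux_nonneg h0 (k+8+1) hs0.le
          positivity
        have hI5nn : 0 ≤ ∫ s in Set.Ioi (0:ℝ),
            (((k+8:ℕ):ℝ) * hbar / (hbar + s))^5 * phiAux hbar (k+8+1) s := by
          apply MeasureTheory.setIntegral_nonneg measurableSet_Ioi
          intro s hs
          have hs0 : (0:ℝ) < s := hs
          have := phiAux_nonneg h0 (k+8+1) hs0.le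
          positivity
        -- factorial arithmetic
        have hfact7 : ((k+8+1).factorial : ℝ)
            = ((k:ℝ)+9) * ((k:ℝ)+8) * ((k+7).factorial : ℝ) := by
          have hn : (k+8+1).factorial = (k+9) * ((k+8) * (k+7).factorial) := by
            rw [show k+8+1 = (k+7)+1+1 by omega, Nat.factorial_succ, Nat.factorial_succ]
            try ring
          rw [hn]; push_cast; ring
        have hfact4 : ((k+8+1).factorial : ℝ)
            = ((k:ℝ)+9) * ((k:ℝ)+8) * ((k:ℝ)+7) * ((k:ℝ)+6) * ((k:ℝ)+5)
              * ((k+4).factorial : ℝ) := by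
          have hn : (k+8+1).factorial
              = (k+9) * ((k+8) * ((k+7) * ((k+6) * ((k+5) * (k+4).factorial)))) := by
            rw [show k+8+1 = (k+4)+1+1+1+1+1 by omega, Nat.factorial_succ,
              Nat.factorial_succ, Nat.factorial_succ, Nat.factorial_succ,
              Nat.factorial_succ]
            try ring
          rw [hn]; push_cast; ring
        have hf7pos : (0:ℝ) < ((k+7).factorial : ℝ) :=
          Nat.cast_pos.mpr (Nat.factorial_pos _)
        have hf4pos : (0:ℝ) < ((k+4).factorial : ℝ) :=
          Nat.cast_pos.mpr (Nat.factorial_pos _)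
        have hfac2 : 3 * ((k+8:ℕ):ℝ)^2 * (((k+7).factorial : ℝ) / ((k+8+1).factorial : ℝ)) ≤ 3 := by
          rw [hfact7, hJc]
          have heq : ((k+7).factorial : ℝ) / (((k:ℝ)+9) * ((k:ℝ)+8) * ((k+7).factorial : ℝ))
              = 1 / (((k:ℝ)+9) * ((k:ℝ)+8)) := by
            rw [div_eq_div_iff (by positivity) (by positivity)]; ring
          rw [heq]
          rw [mul_one_div, div_le_iff₀ (by positivity)]
          nlinarith
        have hfac5 : 3 * ((k+8:ℕ):ℝ)^5 * (((k+4).factorial : ℝ) / ((k+8+1).factorial : ℝ)) ≤ 12 := by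
          rw [hfact4, hJc]
          have heq : ((k+4).factorial : ℝ)
              / (((k:ℝ)+9) * ((k:ℝ)+8) * ((k:ℝ)+7) * ((k:ℝ)+6) * ((k:ℝ)+5) * ((k+4).factorial : ℝ))
              = 1 / (((k:ℝ)+9) * ((k:ℝ)+8) * ((k:ℝ)+7) * ((k:ℝ)+6) * ((k:ℝ)+5)) := by
            rw [div_eq_div_iff (by positivity) (by positivity)]; ring
          rw [heq]
          rw [mul_one_div, div_le_iff₀ (by positivity)]
          nlinarith [pow_nonneg hkc 2, pow_nonneg hkc 3, pow_nonneg hkc 4, pow_nonneg hkc 5, hkc]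
        have hsum : (16/15:ℝ)^2 * (∫ s in Set.Ioi (0:ℝ),
              (((k+8:ℕ):ℝ) * hbar / (hbar + s))^2 * phiAux hbar (k+8+1) s)
            + (16/15:ℝ)^5 * (∫ s in Set.Ioi (0:ℝ),
              (((k+8:ℕ):ℝ) * hbar / (hbar + s))^5 * phiAux hbar (k+8+1) s) ≤ 64 := by
          have b2 : (16/15:ℝ)^2 * (∫ s in Set.Ioi (0:ℝ),
              (((k+8:ℕ):ℝ) * hbar / (hbar + s))^2 * phiAux hbar (k+8+1) s)
              ≤ (16/15:ℝ)^2 * 3 := by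
            apply mul_le_mul_of_nonneg_left _ (by positivity)
            calc _ ≤ 3 * ((k+8:ℕ):ℝ)^2 * (((k+7).factorial : ℝ) / ((k+8+1).factorial : ℝ)) := hM2
              _ ≤ 3 := hfac2
          have b5 : (16/15:ℝ)^5 * (∫ s in Set.Ioi (0:ℝ),
              (((k+8:ℕ):ℝ) * hbar / (hbar + s))^5 * phiAux hbar (k+8+1) s)
              ≤ (16/15:ℝ)^5 * 12 := by
            apply mul_le_mul_of_nonneg_left _ (by positivity)
            calc _ ≤ 3 * ((k+8:ℕ):ℝ)^5 * (((k+4).factorial : ℝ) / ((k+8+1).factorial : ℝ)) := hM5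
              _ ≤ 12 := hfac5
          have : (16/15:ℝ)^2 * 3 + (16/15:ℝ)^5 * 12 ≤ 64 := by norm_num
          linarith
        have h64 : (64:ℝ) ≤ (8:ℝ) ^ (ν+1) := by
          have h2 : (8:ℝ) ^ (2:ℝ) ≤ (8:ℝ) ^ (ν+1) :=
            Real.rpow_le_rpow_of_exponent_le (by norm_num) (by linarith)
          rwa [show (2:ℝ) = ((2:ℕ):ℝ) by norm_num, Real.rpow_natCast, show ((8:ℝ)^(2:ℕ)) = 64 by norm_num] at h2
        rw [hXinv]
        calc E ≤ (X ^ (ν+1))⁻¹ * ((16/15)^2 * (∫ s in Set.Ioi (0:ℝ),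
              (((k+8:ℕ):ℝ) * hbar / (hbar + s))^2 * phiAux hbar (k+8+1) s)
            + (16/15)^5 * (∫ s in Set.Ioi (0:ℝ),
              (((k+8:ℕ):ℝ) * hbar / (hbar + s))^5 * phiAux hbar (k+8+1) s)) := hEle
          _ ≤ (X ^ (ν+1))⁻¹ * 64 := by
              apply mul_le_mul_of_nonneg_left hsum (by positivity)
          _ ≤ (X ^ (ν+1))⁻¹ * (8:ℝ) ^ (ν+1) := by
              apply mul_le_mul_of_nonneg_left h64 (by positivity)
          _ = (8:ℝ) ^ (ν+1) * (X ^ (ν+1))⁻¹ := by ring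
    have hfinal := mul_le_mul_of_nonneg_left hstep2 (by positivity : (0:ℝ) ≤ hbar * C₀)
    have hgoal : (8:ℝ) ^ (ν + 1) * hbar * C₀ * X ^ (-(ν + 1))
        = hbar * C₀ * ((8:ℝ) ^ (ν+1) * X ^ (-ν-1)) := by
      rw [show -(ν+1) = -ν-1 by ring]; ring
    rw [hgoal]
    linarith
end
end

section
/- Let d ≥ 1, ħ > 0, and x, ξ ∈ ℝ^d. Define the coherent state φ : ℝ^d → ℂ by φ(y) = (πħ)^{−d/4} exp(−|y−x|²/(2ħ)) exp(i ξ·(y−x)/ħ). Then φ is an eigenfunction of the transport cost operator with eigenvalue dħ/2: for every y ∈ ℝ^d, (1/2)(|x−y|² + |ξ|²) φ(y) + i ħ ξ·∇φ(y) − (ħ²/2) Δφ(y) = (dħ/2) φ(y). -/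
open scoped Real

noncomputable section

/-- The coherent state
`φ(y) = (π hbar)^{−d/4} e^{−|y−x|²/(2 hbar)} e^{i ξ·(y−x)/hbar)` is an eigenfunction of the
transport cost operator `c_hbar(x,ξ) = ½(|x−y|² + |ξ|²) + i hbar ξ·∇ − (hbar²/2) Δ` with
eigenvalue `d hbar / 2`. Here `ξ·∇φ(y) = ∑ᵢ ξᵢ ∂ᵢφ(y)` and `Δφ(y) = ∑ᵢ ∂ᵢ²φ(y)`, the
partial derivatives being taken along the coordinate directions of `ℝ^d`. -/
theorem coherent_state_cost_eigenfunction
    (d : ℕ) (hd : 1 ≤ d) (hbar : ℝ) (hhbar : 0 < hbar)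
    (x ξ : EuclideanSpace ℝ (Fin d))
    (φ : EuclideanSpace ℝ (Fin d) → ℂ)
    (hφ : ∀ y, φ y = (((π * hbar) ^ (-(d : ℝ) / 4) : ℝ) : ℂ) *
      Complex.exp (-((‖y - x‖ ^ 2 / (2 * hbar) : ℝ) : ℂ)) *
      Complex.exp (Complex.I * ((inner ℝ ξ (y - x) : ℝ) : ℂ) / (hbar : ℂ))) :
    ∀ y : EuclideanSpace ℝ (Fin d),
      ((1 : ℂ) / 2) * (((‖x - y‖ ^ 2 + ‖ξ‖ ^ 2 : ℝ) : ℂ)) * φ y +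
        Complex.I * (hbar : ℂ) *
          (∑ i : Fin d, ((ξ i : ℝ) : ℂ) * fderiv ℝ φ y (EuclideanSpace.single i (1 : ℝ))) -
        ((hbar : ℂ) ^ 2 / 2) *
          (∑ i : Fin d,
            fderiv ℝ (fun w => fderiv ℝ φ w (EuclideanSpace.single i (1 : ℝ))) y
              (EuclideanSpace.single i (1 : ℝ)))
      = (((d : ℝ) * hbar / 2 : ℝ) : ℂ) * φ y := by
  classical
  intro y
  have hh : (hbar : ℝ) ≠ 0 := hhbar.ne'
  have hhC : (hbar : ℂ) ≠ 0 := by exact_mod_cast hh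
  have hn : ∀ v : EuclideanSpace ℝ (Fin d), ‖v‖ ^ 2 = ∑ i, (v i) ^ 2 := by
    intro v
    rw [EuclideanSpace.norm_eq, Real.sq_sqrt (by positivity)]
    simp [sq_abs]
  set C : ℂ := (((π * hbar) ^ (-(d : ℝ) / 4) : ℝ) : ℂ) with hC
  set L : Fin d → (EuclideanSpace ℝ (Fin d) →L[ℝ] ℂ) :=
    fun j => Complex.ofRealCLM.comp (EuclideanSpace.proj j) with hL
  set A : Fin d → EuclideanSpace ℝ (Fin d) → ℂ :=
    fun j z => ((hbar : ℂ))⁻¹ * (-(((z j - x j : ℝ)) : ℂ) + Complex.I * ((ξ j : ℝ) : ℂ)) with hA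
  set F : EuclideanSpace ℝ (Fin d) → ℂ := fun z =>
    ∑ j, ((-((2 : ℂ) * (hbar : ℂ))⁻¹) * ((((z j - x j : ℝ)) : ℂ) * (((z j - x j : ℝ)) : ℂ)) +
      (((hbar : ℂ))⁻¹ * (Complex.I * ((ξ j : ℝ) : ℂ))) * (((z j - x j : ℝ)) : ℂ)) with hF
  have hsub : ∀ (z w : EuclideanSpace ℝ (Fin d)) (j : Fin d), (z - w) j = z j - w j :=
    fun _ _ _ => rfl
  have hφF : ∀ z, φ z = C * Complex.exp (F z) := by
    intro z
    rw [hφ, mul_assoc, ← Complex.exp_add]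
    congr 2
    have h1 : ‖z - x‖ ^ 2 = ∑ j, (z j - x j) ^ 2 := by
      rw [hn]; exact Finset.sum_congr rfl fun j _ => by rw [hsub]
    have h2 : (inner ℝ ξ (z - x) : ℝ) = ∑ j, ξ j * (z j - x j) := by
      rw [PiLp.inner_apply]
      exact Finset.sum_congr rfl fun j _ => by rw [RCLike.inner_apply, hsub]; simp; ring
    rw [hF, h1, h2]
    push_cast
    simp only [← pow_two]
    rw [Finset.sum_add_distrib, ← Finset.mul_sum]
    have e2 : ∑ j, (((hbar : ℂ))⁻¹ * (Complex.I * ((ξ j : ℝ) : ℂ))) * (((z j : ℝ) : ℂ) - ((x j : ℝ) : ℂ))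
        = (((hbar : ℂ))⁻¹ * Complex.I) * ∑ j, ((ξ j : ℝ) : ℂ) * (((z j : ℝ) : ℂ) - ((x j : ℝ) : ℂ)) := by
      rw [Finset.mul_sum]; exact Finset.sum_congr rfl fun j _ => by ring
    rw [e2]
    ring
  have hq : ∀ (j : Fin d) (z : EuclideanSpace ℝ (Fin d)),
      HasFDerivAt (fun w : EuclideanSpace ℝ (Fin d) => (((w j - x j : ℝ)) : ℂ)) (L j) z := by
    intro j z
    have h1 : HasFDerivAt (fun w : EuclideanSpace ℝ (Fin d) => ((w j : ℝ) : ℂ)) (L j) z :=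
      (Complex.ofRealCLM.comp (EuclideanSpace.proj j)).hasFDerivAt
    have h2 := h1.sub_const ((x j : ℝ) : ℂ)
    simpa [Complex.ofReal_sub] using h2
  have hLapp : ∀ (j : Fin d) (v : EuclideanSpace ℝ (Fin d)), (L j) v = ((v j : ℝ) : ℂ) :=
    fun _ _ => rfl
  have hLsingle : ∀ i j : Fin d, (L j) (EuclideanSpace.single i (1 : ℝ)) = if j = i then 1 else 0 := by
    intro i j
    rw [hLapp, EuclideanSpace.single_apply]
    split <;> simp
  have hF' : ∀ z, HasFDerivAt F (∑ j, A j z • L j) z := by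
    intro z
    refine HasFDerivAt.fun_sum fun j _ => ?_
    have h := (((hq j z).mul (hq j z)).const_mul (-((2 : ℂ) * (hbar : ℂ))⁻¹)).add
      ((hq j z).const_mul (((hbar : ℂ))⁻¹ * (Complex.I * ((ξ j : ℝ) : ℂ))))
    convert h using 1
    · rfl
    ext v
    simp only [hA, ContinuousLinearMap.smul_apply, ContinuousLinearMap.add_apply,
      ContinuousLinearMap.coe_smul', Pi.smul_apply, smul_eq_mul, hLapp]
    ring
  have hφ' : ∀ z, HasFDerivAt φ ((φ z) • (∑ j, A j z • L j)) z := by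
    intro z
    have h := ((hF' z).cexp).const_mul C
    have hfun : φ = fun w => C * Complex.exp (F w) := funext hφF
    rw [hfun]
    simpa [smul_smul] using h
  have hd1 : ∀ z i, fderiv ℝ φ z (EuclideanSpace.single i (1 : ℝ)) = φ z * A i z := by
    intro z i
    rw [(hφ' z).fderiv]
    simp only [ContinuousLinearMap.smul_apply, ContinuousLinearMap.sum_apply,
      ContinuousLinearMap.coe_smul', Pi.smul_apply, smul_eq_mul, hLsingle]
    simp [mul_ite, Finset.sum_ite_eq']
  have hA' : ∀ (i : Fin d) (z : EuclideanSpace ℝ (Fin d)),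
      HasFDerivAt (A i) (((hbar : ℂ))⁻¹ • (-(L i))) z := by
    intro i z
    exact ((hq i z).neg.add_const (Complex.I * ((ξ i : ℝ) : ℂ))).const_mul (((hbar : ℂ))⁻¹)
  have hd2 : ∀ i : Fin d,
      fderiv ℝ (fun w => fderiv ℝ φ w (EuclideanSpace.single i (1 : ℝ))) y
        (EuclideanSpace.single i (1 : ℝ))
        = φ y * A i y * A i y - φ y * ((hbar : ℂ))⁻¹ := by
    intro i
    have hfun : (fun w => fderiv ℝ φ w (EuclideanSpace.single i (1 : ℝ)))
        = fun w => φ w * A i w := funext fun z => hd1 z i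
    rw [hfun, ((hφ' y).fun_mul (hA' i y)).fderiv]
    simp only [ContinuousLinearMap.add_apply, ContinuousLinearMap.smul_apply,
      ContinuousLinearMap.sum_apply, ContinuousLinearMap.neg_apply,
      ContinuousLinearMap.coe_smul', Pi.smul_apply, smul_eq_mul, hLsingle]
    simp only [mul_ite, mul_one, mul_zero, Finset.sum_ite_eq', Finset.mem_univ, if_true]
    ring
  -- assemble
  simp only [hd2]
  simp only [hd1]
  set S1 : ℂ := ∑ i, (((x i : ℝ) : ℂ) - ((y i : ℝ) : ℂ)) ^ 2 with hS1
  set S2 : ℂ := ∑ i, ((ξ i : ℝ) : ℂ) ^ 2 with hS2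
  set P : ℂ := ∑ i, ((ξ i : ℝ) : ℂ) * (((x i : ℝ) : ℂ) - ((y i : ℝ) : ℂ)) with hP
  have hxy : ((‖x - y‖ ^ 2 + ‖ξ‖ ^ 2 : ℝ) : ℂ) = S1 + S2 := by
    rw [hS1, hS2]
    have e1 : ‖x - y‖ ^ 2 = ∑ i, (x i - y i) ^ 2 := by
      rw [hn]; exact Finset.sum_congr rfl fun j _ => by rw [hsub]
    rw [e1, hn ξ]
    push_cast
    ring
  have hT : ∑ i, ((ξ i : ℝ) : ℂ) * (φ y * A i y)
      = (φ y * ((hbar : ℂ))⁻¹) * P + (φ y * ((hbar : ℂ))⁻¹ * Complex.I) * S2 := by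
    rw [Finset.sum_congr rfl fun i _ => show ((ξ i : ℝ) : ℂ) * (φ y * A i y)
        = (φ y * ((hbar : ℂ))⁻¹) * (((ξ i : ℝ) : ℂ) * (((x i : ℝ) : ℂ) - ((y i : ℝ) : ℂ)))
          + (φ y * ((hbar : ℂ))⁻¹ * Complex.I) * ((ξ i : ℝ) : ℂ) ^ 2 from by
      rw [hA]; push_cast; ring]
    rw [Finset.sum_add_distrib, ← Finset.mul_sum, ← Finset.mul_sum, hP, hS2]
  have hU : ∑ i, (φ y * A i y * A i y - φ y * ((hbar : ℂ))⁻¹)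
      = (φ y * ((hbar : ℂ))⁻¹ ^ 2) * S1 + (φ y * ((hbar : ℂ))⁻¹ ^ 2 * Complex.I ^ 2) * S2
        + (2 * φ y * ((hbar : ℂ))⁻¹ ^ 2 * Complex.I) * P - (d : ℂ) * (φ y * ((hbar : ℂ))⁻¹) := by
    rw [Finset.sum_congr rfl fun i _ => show φ y * A i y * A i y - φ y * ((hbar : ℂ))⁻¹
        = ((φ y * ((hbar : ℂ))⁻¹ ^ 2) * ((((x i : ℝ) : ℂ) - ((y i : ℝ) : ℂ)) ^ 2)
          + (φ y * ((hbar : ℂ))⁻¹ ^ 2 * Complex.I ^ 2) * ((ξ i : ℝ) : ℂ) ^ 2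
          + (2 * φ y * ((hbar : ℂ))⁻¹ ^ 2 * Complex.I)
              * (((ξ i : ℝ) : ℂ) * (((x i : ℝ) : ℂ) - ((y i : ℝ) : ℂ))))
          - φ y * ((hbar : ℂ))⁻¹ from by
      rw [hA]; push_cast; ring]
    rw [Finset.sum_sub_distrib, Finset.sum_add_distrib, Finset.sum_add_distrib,
      ← Finset.mul_sum, ← Finset.mul_sum, ← Finset.mul_sum, hS1, hS2, hP]
    simp [Finset.sum_const, Finset.card_univ, nsmul_eq_mul]
  rw [hxy, hT, hU]
  push_cast
  field_simp
  ring_nf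
  simp only [Complex.I_sq]
  ring_nf
end
end
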